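/- arXiv:1807.00622 — 5 statements merged into one kernel-verified Lean document; each statement's English description precedes it below -/
import Mathlib

section
/- Let A, B, G₁, …, Gₙ be groups. Assume that A has trivial center and admits a generating set S of pairwise non-commuting elements whose centralisers are maximal (meaning: for g ∈ S and any h, if C(g) ⊆ C(h) then C(g) = C(h)). Then for every isomorphism φ : A × B → G₁ × ⋯ × Gₙ there exists an index j ∈ {1,…,n} such that φ(A × {1}) ⊆ Z(G₁) × ⋯ × Z(G_{j−1}) × G_j × Z(G_{j+1}) × ⋯ × Z(Gₙ). -/
/-- If `A` is centerless and admits a generating set of pairwise non-commuting elements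
with maximal centralisers, then any isomorphism `A × B ≃* G₁ × ⋯ × Gₙ` sends `A` into
`Z(G₁) × ⋯ × G_j × ⋯ × Z(Gₙ)` for some index `j`. -/
theorem exists_index_of_mulEquiv_prod {A B : Type*} [Group A] [Group B] {n : ℕ} (hn : 0 < n)
    (G : Fin n → Type*) [∀ i, Group (G i)]
    (hZ : Subgroup.center A = ⊥)
    (S : Set A) (hgen : Subgroup.closure S = ⊤)
    (hnc : ∀ g ∈ S, ∀ h ∈ S, g ≠ h → ¬ Commute g h)
    (hmax : ∀ g ∈ S, ∀ h : A,
      Subgroup.centralizer {g} ≤ Subgroup.centralizer {h} →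
      Subgroup.centralizer {g} = Subgroup.centralizer {h})
    (φ : (A × B) ≃* ∀ i, G i) :
    ∃ j : Fin n, ∀ a : A, ∀ i : Fin n, i ≠ j → φ (a, 1) i ∈ Subgroup.center (G i) := by
  classical
  -- commuting in a Pi group is componentwise
  have hpi : ∀ x y : ∀ i, G i, Commute x y ↔ ∀ i, Commute (x i) (y i) := by
    intro x y
    simp only [commute_iff_eq, funext_iff, Pi.mul_apply]
  -- transfer of commuting along φ
  have hφc : ∀ u v : A × B, Commute u v ↔ Commute (φ u) (φ v) := by
    intro u v
    constructor
    · intro h; exact h.map φ.toMonoidHom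
    · intro h
      have := h.map φ.symm.toMonoidHom
      simpa using this
  -- if a component is in the center it commutes with everything
  have hcen : ∀ (i : Fin n) (x : G i), x ∈ Subgroup.center (G i) → ∀ y : G i, Commute y x := by
    intro i x hx y
    exact (Subgroup.mem_center_iff.mp hx y)
  -- Key uniqueness lemma: a generator has at most one non-central component.
  have key : ∀ g ∈ S, ∀ i i' : Fin n, i ≠ i' →
      φ (g, 1) i ∉ Subgroup.center (G i) → φ (g, 1) i' ∈ Subgroup.center (G i') := by
    intro g hg i i' hii hncI
    by_contra hcon
    set x := φ (g, (1 : B)) with hx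
    obtain ⟨u, hu⟩ : ∃ u : G i', ¬ Commute u (x i') := by
      rw [Subgroup.mem_center_iff] at hcon
      push_neg at hcon
      obtain ⟨u, hu⟩ := hcon
      exact ⟨u, fun h => hu h.eq⟩
    set y : ∀ k, G k := Pi.mulSingle i (x i) with hy
    set p := φ.symm y with hp
    have hpy : φ p = y := φ.apply_symm_apply y
    -- centralizer of g is contained in centralizer of p.1
    have hsub : Subgroup.centralizer ({g} : Set A) ≤ Subgroup.centralizer {p.1} := by
      intro c hc
      rw [Subgroup.mem_centralizer_singleton_iff] at hc ⊢
      have hcg : Commute c g := hc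
      have hprod : Commute ((c, (1 : B))) ((g, (1 : B))) := by
        simp [commute_iff_eq, Prod.ext_iff, hcg.eq]
      have hcx : Commute (φ (c, 1)) x := (hφc _ _).mp hprod
      have hcy : Commute (φ (c, 1)) y := by
        rw [hpi]
        intro k
        by_cases hk : k = i
        · subst hk
          simpa [hy, Pi.mulSingle_eq_same] using (hpi _ _).mp hcx k
        · rw [hy, Pi.mulSingle_eq_of_ne hk]
          exact Commute.one_right _
      have hcp : Commute ((c, (1 : B))) p := by
        rw [hφc, hpy]; exact hcy
      exact congrArg Prod.fst hcp.eq
    have heq := hmax g hg p.1 hsub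
    -- the element u placed at coordinate i'
    set w : ∀ k, G k := Pi.mulSingle i' u with hw
    set q := φ.symm w with hq
    have hqw : φ q = w := φ.apply_symm_apply w
    have hwy : Commute w y := by
      rw [hpi]
      intro k
      by_cases hk : k = i'
      · subst hk
        rw [hy, Pi.mulSingle_eq_of_ne (Ne.symm hii)]
        exact Commute.one_right _
      · rw [hw, Pi.mulSingle_eq_of_ne hk]
        exact Commute.one_left _
    have hqp : Commute q p := by rw [hφc, hqw, hpy]; exact hwy
    have hq1 : q.1 ∈ Subgroup.centralizer ({p.1} : Set A) := by
      rw [Subgroup.mem_centralizer_singleton_iff]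
      simpa using congrArg Prod.fst hqp.eq
    have hq1' : q.1 ∈ Subgroup.centralizer ({g} : Set A) := by
      rw [heq]; exact hq1
    have hq1g : Commute q.1 g := by
      rw [Subgroup.mem_centralizer_singleton_iff] at hq1'
      exact hq1'
    have hqg : Commute q ((g, (1 : B))) := by
      rw [commute_iff_eq, Prod.ext_iff]
      refine ⟨by simpa using hq1g.eq, by simp⟩
    have hwx : Commute w x := by rw [hφc, hqw] at hqg; exact hqg
    have : Commute (w i') (x i') := (hpi _ _).mp hwx i'
    rw [hw, Pi.mulSingle_eq_same] at this
    exact hu this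
  -- noncommuting components are non-central
  have hncen : ∀ (i : Fin n) (x y : G i), ¬ Commute x y →
      x ∉ Subgroup.center (G i) ∧ y ∉ Subgroup.center (G i) := by
    intro i x y h
    constructor
    · intro hx; exact h ((hcen i x hx y).symm)
    · intro hy; exact h (hcen i y hy x)
  -- choose the index j
  by_cases hall : ∀ g ∈ S, ∀ i : Fin n, φ (g, 1) i ∈ Subgroup.center (G i)
  · -- every generator maps centrally everywhere; any index works
    refine ⟨⟨0, hn⟩, ?_⟩
    have hSgood : ∀ s ∈ S, ∀ i : Fin n, i ≠ (⟨0, hn⟩ : Fin n) →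
        φ (s, 1) i ∈ Subgroup.center (G i) := fun s hs i _ => hall s hs i
    -- closure argument below (shared shape)
    intro a i hi
    let f : A →* ∀ k, G k := (φ : (A × B) →* ∀ k, G k).comp (MonoidHom.inl A B)
    let K : Subgroup A :=
      (Subgroup.pi {k | k ≠ (⟨0, hn⟩ : Fin n)} fun k => Subgroup.center (G k)).comap f
    have hSK : S ⊆ ↑K := by
      intro s hs
      simp only [K, Subgroup.mem_comap, Subgroup.mem_pi, Set.mem_setOf_eq, SetLike.mem_coe]
      intro k hk
      exact hSgood s hs k hk
    have hle : Subgroup.closure S ≤ K := (Subgroup.closure_le K).mpr hSK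
    rw [hgen] at hle
    have haK : a ∈ K := hle (Subgroup.mem_top a)
    simp only [K, Subgroup.mem_comap, Subgroup.mem_pi, Set.mem_setOf_eq] at haK
    exact haK i hi
  · push_neg at hall
    obtain ⟨g₀, hg₀, j, hj⟩ := hall
    refine ⟨j, ?_⟩
    -- every generator is central off j
    have hSgood : ∀ s ∈ S, ∀ i : Fin n, i ≠ j → φ (s, 1) i ∈ Subgroup.center (G i) := by
      intro s hs i hi
      by_cases hsg : s = g₀
      · subst hsg
        exact key s hs j i (Ne.symm hi) hj
      · have hnc' : ¬ Commute s g₀ := hnc s hs g₀ hg₀ hsg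
        have hprod : ¬ Commute ((s, (1 : B))) ((g₀, (1 : B))) := by
          intro h
          apply hnc'
          have := congrArg Prod.fst h.eq
          simpa [commute_iff_eq] using this
        have hφnc : ¬ Commute (φ (s, 1)) (φ (g₀, 1)) := fun h => hprod ((hφc _ _).mpr h)
        rw [hpi] at hφnc
        push_neg at hφnc
        obtain ⟨k, hk⟩ := hφnc
        obtain ⟨hks, hkg⟩ := hncen k _ _ hk
        -- k must equal j, by uniqueness for g₀
        have hkj : k = j := by
          by_contra hkj
          exact hkg (key g₀ hg₀ j k (fun h => hkj h.symm) hj)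
        subst hkj
        exact key s hs k i (Ne.symm hi) hks
    intro a i hi
    let f : A →* ∀ k, G k := (φ : (A × B) →* ∀ k, G k).comp (MonoidHom.inl A B)
    let K : Subgroup A :=
      (Subgroup.pi {k | k ≠ j} fun k => Subgroup.center (G k)).comap f
    have hSK : S ⊆ ↑K := by
      intro s hs
      simp only [K, Subgroup.mem_comap, Subgroup.mem_pi, Set.mem_setOf_eq, SetLike.mem_coe]
      intro k hk
      exact hSgood s hs k hk
    have hle : Subgroup.closure S ≤ K := (Subgroup.closure_le K).mpr hSK
    rw [hgen] at hle
    have haK : a ∈ K := hle (Subgroup.mem_top a)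
    simp only [K, Subgroup.mem_comap, Subgroup.mem_pi, Set.mem_setOf_eq] at haK
    exact haK i hi
end

section
/- Let T be a tree-graded space and R ⊆ T a full subspace. Then R is strongly convex: every topological arc between two points of R lies entirely in R. -/
section TreeGraded

variable {T : Type*} [MetricSpace T]

/-- `γ` is a geodesic from `x` to `y`, parameterized by arclength on `[0, dist x y]`. -/
def IsGeodesicFrom (γ : ℝ → T) (x y : T) : Prop :=
  γ 0 = x ∧ γ (dist x y) = y ∧
    ∀ s ∈ Set.Icc (0 : ℝ) (dist x y), ∀ t ∈ Set.Icc (0 : ℝ) (dist x y),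
      dist (γ s) (γ t) = |s - t|

/-- `s` is the image of a geodesic from `x` to `y`. -/
def IsGeodesicSegment (s : Set T) (x y : T) : Prop :=
  ∃ γ : ℝ → T, IsGeodesicFrom γ x y ∧ s = γ '' Set.Icc (0 : ℝ) (dist x y)

/-- A subspace is geodesic if any two of its points are joined by a geodesic of the
ambient space lying in the subspace. -/
def IsGeodesicSubspace (A : Set T) : Prop :=
  ∀ x ∈ A, ∀ y ∈ A, ∃ s : Set T, IsGeodesicSegment s x y ∧ s ⊆ A

/-- `S` is a simple non-trivial geodesic triangle: the union of three geodesic segments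
joining three pairwise distinct points, any two sides meeting exactly in their common
endpoint. -/
def IsSimpleGeodesicTriangle (S : Set T) : Prop :=
  ∃ (x y z : T) (s₁ s₂ s₃ : Set T),
    x ≠ y ∧ y ≠ z ∧ x ≠ z ∧
    IsGeodesicSegment s₁ x y ∧ IsGeodesicSegment s₂ y z ∧ IsGeodesicSegment s₃ z x ∧
    s₁ ∩ s₂ = {y} ∧ s₂ ∩ s₃ = {z} ∧ s₃ ∩ s₁ = {x} ∧ S = s₁ ∪ s₂ ∪ s₃

/-- `T` is tree-graded with respect to the collection of pieces `P`: it is a complete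
geodesic metric space, the pieces are closed geodesic subspaces, two distinct pieces meet
in at most one point, and every simple non-trivial geodesic triangle lies in a piece. -/
structure IsTreeGraded (T : Type*) [MetricSpace T] (P : Set (Set T)) : Prop where
  complete : CompleteSpace T
  geodesic : ∀ x y : T, ∃ s : Set T, IsGeodesicSegment s x y
  piece_closed : ∀ A ∈ P, IsClosed A
  piece_geodesic : ∀ A ∈ P, IsGeodesicSubspace A
  piece_inter : ∀ A ∈ P, ∀ B ∈ P, A ≠ B → (A ∩ B).Subsingleton
  triangle_in_piece : ∀ S : Set T, IsSimpleGeodesicTriangle S → ∃ A ∈ P, S ⊆ A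

/-- A subspace of a tree-graded space is full if it is closed, connected, and contains
every piece meeting it in at least two points. -/
def IsFullSubspace (P : Set (Set T)) (R : Set T) : Prop :=
  IsClosed R ∧ IsConnected R ∧ ∀ A ∈ P, ¬ (A ∩ R).Subsingleton → A ⊆ R

end TreeGraded


namespace TGAux

open Set

variable {T : Type*} [MetricSpace T]

/-- A bundled geodesic: an isometric map on `[0, len]`. -/
structure Geo (T : Type*) [MetricSpace T] where
  γ : ℝ → T
  len : ℝ
  len_nonneg : 0 ≤ len
  isom : ∀ s ∈ Set.Icc (0:ℝ) len, ∀ t ∈ Set.Icc (0:ℝ) len, dist (γ s) (γ t) = |s - t|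

namespace Geo

variable (G : Geo T)

def src : T := G.γ 0
def dst : T := G.γ G.len
def seg : Set T := G.γ '' Set.Icc 0 G.len

lemma mem_seg {t : ℝ} (ht : t ∈ Icc 0 G.len) : G.γ t ∈ G.seg := ⟨t, ht, rfl⟩

lemma src_mem : G.src ∈ G.seg := G.mem_seg ⟨le_refl _, G.len_nonneg⟩

lemma dst_mem : G.dst ∈ G.seg := G.mem_seg ⟨G.len_nonneg, le_refl _⟩

lemma dist_src_dst : dist G.src G.dst = G.len := by
  have := G.isom 0 ⟨le_refl _, G.len_nonneg⟩ G.len ⟨G.len_nonneg, le_refl _⟩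
  simpa [src, dst, abs_of_nonpos, G.len_nonneg] using this

lemma dist_src {t : ℝ} (ht : t ∈ Icc 0 G.len) : dist G.src (G.γ t) = t := by
  have := G.isom 0 ⟨le_refl _, G.len_nonneg⟩ t ht
  rw [src, this, abs_sub_comm, sub_zero, abs_of_nonneg ht.1]

lemma dist_dst {t : ℝ} (ht : t ∈ Icc 0 G.len) : dist (G.γ t) G.dst = G.len - t := by
  have := G.isom t ht G.len ⟨G.len_nonneg, le_refl _⟩
  rw [dst, this, abs_of_nonpos (by linarith [ht.2]), neg_sub]

lemma injOn : InjOn G.γ (Icc 0 G.len) := by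
  intro s hs t ht h
  have := G.isom s hs t ht
  rw [h, dist_self] at this
  have : |s - t| = 0 := this.symm
  have := abs_eq_zero.mp this
  linarith

lemma continuousOn : ContinuousOn G.γ (Icc 0 G.len) := by
  refine Metric.continuousOn_iff.2 (fun t ht ε hε => ⟨ε, hε, fun s hs hd => ?_⟩)
  rw [G.isom s hs t ht]
  calc |s - t| = dist s t := (Real.dist_eq s t).symm
  _ < ε := hd

lemma isCompact_seg : IsCompact G.seg := isCompact_Icc.image_of_continuousOn G.continuousOn

lemma isClosed_seg : IsClosed G.seg := G.isCompact_seg.isClosed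

lemma param_of_mem {p : T} (hp : p ∈ G.seg) :
    dist G.src p ∈ Icc 0 G.len ∧ G.γ (dist G.src p) = p := by
  obtain ⟨t, ht, rfl⟩ := hp
  rw [G.dist_src ht]
  exact ⟨ht, rfl⟩

lemma dist_src_le {p : T} (hp : p ∈ G.seg) : dist G.src p ≤ G.len := (G.param_of_mem hp).1.2

/-- The sub-geodesic on `[c, d]`. -/
def portion (c d : ℝ) (h0 : 0 ≤ c) (hcd : c ≤ d) (hd : d ≤ G.len) : Geo T where
  γ := fun t => G.γ (c + t)
  len := d - c
  len_nonneg := by linarith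
  isom := by
    intro s hs t ht
    have h1 : c + s ∈ Icc 0 G.len := ⟨by linarith [hs.1], by linarith [hs.2]⟩
    have h2 : c + t ∈ Icc 0 G.len := ⟨by linarith [ht.1], by linarith [ht.2]⟩
    rw [G.isom _ h1 _ h2]
    congr 1
    ring

@[simp] lemma portion_src (c d : ℝ) (h0 : 0 ≤ c) (hcd : c ≤ d) (hd : d ≤ G.len) :
    (G.portion c d h0 hcd hd).src = G.γ c := by simp [portion, src]

@[simp] lemma portion_dst (c d : ℝ) (h0 : 0 ≤ c) (hcd : c ≤ d) (hd : d ≤ G.len) :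
    (G.portion c d h0 hcd hd).dst = G.γ d := by simp [portion, dst]

@[simp] lemma portion_len (c d : ℝ) (h0 : 0 ≤ c) (hcd : c ≤ d) (hd : d ≤ G.len) :
    (G.portion c d h0 hcd hd).len = d - c := rfl

lemma portion_seg (c d : ℝ) (h0 : 0 ≤ c) (hcd : c ≤ d) (hd : d ≤ G.len) :
    (G.portion c d h0 hcd hd).seg = G.γ '' Icc c d := by
  unfold seg portion
  ext p
  constructor
  · rintro ⟨t, ht, rfl⟩
    have ht' : t ∈ Icc (0:ℝ) (d - c) := ht
    exact ⟨c + t, ⟨by linarith [ht'.1], by linarith [ht'.2]⟩, rfl⟩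
  · rintro ⟨t, ht, rfl⟩
    refine ⟨t - c, ⟨by linarith [ht.1], ?_⟩, by simp⟩
    show t - c ≤ d - c
    linarith [ht.2]

lemma portion_seg_subset (c d : ℝ) (h0 : 0 ≤ c) (hcd : c ≤ d) (hd : d ≤ G.len) :
    (G.portion c d h0 hcd hd).seg ⊆ G.seg := by
  rw [portion_seg]
  exact image_mono (fun t ht => ⟨le_trans h0 ht.1, le_trans ht.2 hd⟩)

/-- The reversed geodesic. -/
def reverse : Geo T where
  γ := fun t => G.γ (G.len - t)
  len := G.len
  len_nonneg := G.len_nonneg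
  isom := by
    intro s hs t ht
    have h1 : G.len - s ∈ Icc 0 G.len := ⟨by linarith [hs.2], by linarith [hs.1]⟩
    have h2 : G.len - t ∈ Icc 0 G.len := ⟨by linarith [ht.2], by linarith [ht.1]⟩
    rw [G.isom _ h1 _ h2]
    rw [show G.len - s - (G.len - t) = -(s - t) by ring, abs_neg]

@[simp] lemma reverse_src : G.reverse.src = G.dst := by simp [reverse, src, dst]

@[simp] lemma reverse_dst : G.reverse.dst = G.src := by simp [reverse, dst, src]

@[simp] lemma reverse_len : G.reverse.len = G.len := rfl

lemma reverse_γ (t : ℝ) : G.reverse.γ t = G.γ (G.len - t) := rfl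

@[simp] lemma reverse_seg : G.reverse.seg = G.seg := by
  unfold seg reverse
  ext p
  constructor
  · rintro ⟨t, ht, rfl⟩
    exact ⟨G.len - t, ⟨by linarith [ht.2], by linarith [ht.1]⟩, rfl⟩
  · rintro ⟨t, ht, rfl⟩
    exact ⟨G.len - t, ⟨by linarith [ht.2], by linarith [ht.1]⟩, by simp⟩

/-- The trivial geodesic at a point. -/
def triv (x : T) : Geo T where
  γ := fun _ => x
  len := 0
  len_nonneg := le_refl _
  isom := by
    intro s hs t ht
    have : s = 0 := le_antisymm hs.2 hs.1
    have ht' : t = 0 := le_antisymm ht.2 ht.1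
    simp [this, ht']

@[simp] lemma triv_src (x : T) : (triv x : Geo T).src = x := rfl
@[simp] lemma triv_dst (x : T) : (triv x : Geo T).dst = x := rfl
@[simp] lemma triv_seg (x : T) : (triv x : Geo T).seg = {x} := by
  simp [seg, triv]

lemma isGeodesicFrom : IsGeodesicFrom G.γ G.src G.dst := by
  refine ⟨rfl, ?_, ?_⟩
  · rw [G.dist_src_dst]; rfl
  · rw [G.dist_src_dst]; exact G.isom

lemma isSeg : IsGeodesicSegment G.seg G.src G.dst :=
  ⟨G.γ, G.isGeodesicFrom, by rw [G.dist_src_dst]; rfl⟩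

end Geo

lemma exists_geo_of_seg {s : Set T} {x y : T} (h : IsGeodesicSegment s x y) :
    ∃ G : Geo T, G.src = x ∧ G.dst = y ∧ G.seg = s := by
  obtain ⟨γ, ⟨h0, hd, hisom⟩, rfl⟩ := h
  exact ⟨⟨γ, dist x y, dist_nonneg, hisom⟩, h0, hd, rfl⟩

open Set in
lemma gap_lemma {E : Set ℝ} (hE : IsClosed E) {A B t : ℝ} (hA : A ∈ E) (hB : B ∈ E)
    (hAt : A ≤ t) (htB : t ≤ B) (ht : t ∉ E) :
    ∃ α β, α ∈ E ∧ β ∈ E ∧ A ≤ α ∧ α < t ∧ t < β ∧ β ≤ B ∧ ∀ r ∈ Set.Ioo α β, r ∉ E := by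
  have h1 : (E ∩ Icc A t).Nonempty := ⟨A, hA, ⟨le_refl _, hAt⟩⟩
  have h2 : (E ∩ Icc t B).Nonempty := ⟨B, hB, ⟨htB, le_refl _⟩⟩
  have hc1 : IsClosed (E ∩ Icc A t) := hE.inter isClosed_Icc
  have hc2 : IsClosed (E ∩ Icc t B) := hE.inter isClosed_Icc
  have hb1 : BddAbove (E ∩ Icc A t) := BddAbove.mono inter_subset_right bddAbove_Icc
  have hb2 : BddBelow (E ∩ Icc t B) := BddBelow.mono inter_subset_right bddBelow_Icc
  have hα : sSup (E ∩ Icc A t) ∈ E ∩ Icc A t := hc1.csSup_mem h1 hb1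
  have hβ : sInf (E ∩ Icc t B) ∈ E ∩ Icc t B := hc2.csInf_mem h2 hb2
  have hαt : sSup (E ∩ Icc A t) < t := lt_of_le_of_ne hα.2.2 (fun h => ht (h ▸ hα.1))
  have htβ : t < sInf (E ∩ Icc t B) := lt_of_le_of_ne (hβ.2.1) (fun h => ht (h.symm ▸ hβ.1))
  refine ⟨_, _, hα.1, hβ.1, hα.2.1, hαt, htβ, hβ.2.2, ?_⟩
  intro r hr hrE
  rcases le_total r t with h | h
  · have : r ≤ sSup (E ∩ Icc A t) := le_csSup hb1 ⟨hrE, ⟨le_trans hα.2.1 (le_of_lt hr.1), h⟩⟩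
    linarith [hr.1]
  · have : sInf (E ∩ Icc t B) ≤ r := csInf_le hb2 ⟨hrE, ⟨h, le_trans (le_of_lt hr.2) hβ.2.2⟩⟩
    linarith [hr.2]

variable {P : Set (Set T)}

lemma pieces_eq (hT : IsTreeGraded T P) {A B : Set T} (hA : A ∈ P) (hB : B ∈ P)
    {p q : T} (hpA : p ∈ A) (hpB : p ∈ B) (hqA : q ∈ A) (hqB : q ∈ B) (hpq : p ≠ q) : A = B := by
  by_contra h
  exact hpq (hT.piece_inter A hA B hB h ⟨hpA, hpB⟩ ⟨hqA, hqB⟩)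

open Set in
/-- From a simple geodesic bigon, both sides lie in a common piece. -/
lemma bigon_piece (hT : IsTreeGraded T P) {x y : T} (hxy : x ≠ y)
    {s s' : Set T} (hs : IsGeodesicSegment s x y) (hs' : IsGeodesicSegment s' x y)
    (hint : s ∩ s' = {x, y}) : ∃ A ∈ P, s ∪ s' ⊆ A := by
  obtain ⟨H, hHs, hHd, hHseg⟩ := exists_geo_of_seg hs'
  obtain ⟨Gs, hGs, hGd, hGseg⟩ := exists_geo_of_seg hs
  have hlen : 0 < H.len := by
    rw [← H.dist_src_dst, hHs, hHd]; exact dist_pos.2 hxy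
  have hh0 : (0:ℝ) ≤ H.len/2 := by linarith
  have hhl : H.len/2 ≤ H.len := by linarith
  set z := H.γ (H.len/2) with hz
  set s₂ : Set T := H.γ '' Icc (H.len/2) H.len with hs₂
  set s₃ : Set T := H.γ '' Icc 0 (H.len/2) with hs₃
  have hzx : z ≠ x := by
    intro h
    have : dist H.src z = H.len/2 := H.dist_src ⟨hh0, hhl⟩
    rw [h, hHs] at this
    simp at this
    linarith
  have hzy : z ≠ y := by
    intro h
    have : dist z H.dst = H.len - H.len/2 := H.dist_dst ⟨hh0, hhl⟩
    rw [h, hHd] at this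
    simp at this
    linarith
  have hxs2 : x ∉ s₂ := by
    rintro ⟨t, ht, hxt⟩
    have : dist H.src (H.γ t) = t := H.dist_src ⟨le_trans hh0 ht.1, ht.2⟩
    rw [hxt, hHs, dist_self] at this
    linarith [ht.1]
  have hys3 : y ∉ s₃ := by
    rintro ⟨t, ht, hyt⟩
    have : dist (H.γ t) H.dst = H.len - t := H.dist_dst ⟨ht.1, le_trans ht.2 hhl⟩
    rw [hyt, hHd, dist_self] at this
    have : t = H.len := by linarith
    linarith [ht.2]
  have hys2 : y ∈ s₂ := ⟨H.len, ⟨hhl, le_refl _⟩, by rw [← hHd]; rfl⟩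
  have hxs3 : x ∈ s₃ := ⟨0, ⟨le_refl _, hh0⟩, by rw [← hHs]; rfl⟩
  have hzs2 : z ∈ s₂ := ⟨H.len/2, ⟨le_refl _, hhl⟩, rfl⟩
  have hzs3 : z ∈ s₃ := ⟨H.len/2, ⟨hh0, le_refl _⟩, rfl⟩
  have hxseg : x ∈ s := by rw [← hGseg, ← hGs]; exact Gs.src_mem
  have hyseg : y ∈ s := by rw [← hGseg, ← hGd]; exact Gs.dst_mem
  have hsub2 : s₂ ⊆ s' := by
    rw [← hHseg]; exact image_mono (fun t ht => ⟨le_trans hh0 ht.1, ht.2⟩)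
  have hsub3 : s₃ ⊆ s' := by
    rw [← hHseg]; exact image_mono (fun t ht => ⟨ht.1, le_trans ht.2 hhl⟩)
  have hseg2 : IsGeodesicSegment s₂ y z := by
    have := ((H.portion (H.len/2) H.len hh0 hhl (le_refl _)).reverse).isSeg
    simp only [Geo.reverse_src, Geo.reverse_dst, Geo.reverse_seg, Geo.portion_src,
      Geo.portion_dst, Geo.portion_seg] at this
    rw [← hHd]
    exact this
  have hseg3 : IsGeodesicSegment s₃ z x := by
    have := ((H.portion 0 (H.len/2) (le_refl _) hh0 hhl).reverse).isSeg
    simp only [Geo.reverse_src, Geo.reverse_dst, Geo.reverse_seg, Geo.portion_src,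
      Geo.portion_dst, Geo.portion_seg] at this
    rw [← hHs]
    exact this
  have hi12 : s ∩ s₂ = {y} := by
    apply Subset.antisymm
    · intro q hq
      have : q ∈ s ∩ s' := ⟨hq.1, hsub2 hq.2⟩
      rw [hint] at this
      rcases this with h | h
      · exact absurd (h ▸ hq.2) hxs2
      · exact h
    · intro q hq
      rw [mem_singleton_iff] at hq
      exact hq ▸ ⟨hyseg, hys2⟩
  have hi31 : s₃ ∩ s = {x} := by
    apply Subset.antisymm
    · intro q hq
      have : q ∈ s ∩ s' := ⟨hq.2, hsub3 hq.1⟩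
      rw [hint] at this
      rcases this with h | h
      · exact h
      · exact absurd (h ▸ hq.1) hys3
    · intro q hq
      rw [mem_singleton_iff] at hq
      exact hq ▸ ⟨hxs3, hxseg⟩
  have hi23 : s₂ ∩ s₃ = {z} := by
    apply Subset.antisymm
    · rintro q ⟨⟨t, ht, rfl⟩, ⟨t', ht', hq'⟩⟩
      have := H.injOn ⟨ht'.1, le_trans ht'.2 hhl⟩ ⟨le_trans hh0 ht.1, ht.2⟩ hq'
      rw [mem_singleton_iff]
      have htl : t = H.len/2 := by rw [← this] at ht; linarith [ht.1, ht'.2]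
      rw [htl]
    · intro q hq
      rw [mem_singleton_iff] at hq
      exact hq ▸ ⟨hzs2, hzs3⟩
  obtain ⟨A, hAP, hSA⟩ := hT.triangle_in_piece (s ∪ s₂ ∪ s₃)
    ⟨x, y, z, s, s₂, s₃, hxy, Ne.symm hzy, Ne.symm hzx, hs, hseg2, hseg3,
      hi12, hi23, hi31, rfl⟩
  refine ⟨A, hAP, ?_⟩
  have hs'eq : s' = s₃ ∪ s₂ := by
    rw [← hHseg, hs₃, hs₂, ← image_union, Icc_union_Icc_eq_Icc hh0 hhl]
    rfl
  intro q hq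
  rcases hq with h | h
  · exact hSA (Or.inl (Or.inl h))
  · rw [hs'eq] at h
    rcases h with h | h
    · exact hSA (Or.inr h)
    · exact hSA (Or.inl (Or.inr h))

open Set in
/-- Two geodesics from a common point: there is a "last common point" `c` after which
they are disjoint (except at `c`). -/
lemma corner (Pg Qg : Geo T) (hz : Pg.src = Qg.src) :
    ∃ c : T, c ∈ Pg.seg ∧ c ∈ Qg.seg ∧
    ∃ sP sQ : Set T, IsGeodesicSegment sP Pg.dst c ∧ sP ⊆ Pg.seg ∧
      IsGeodesicSegment sQ c Qg.dst ∧ sQ ⊆ Qg.seg ∧ sP ∩ sQ = {c} := by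
  set K := {r : ℝ | r ∈ Icc 0 (min Pg.len Qg.len) ∧ Pg.γ r = Qg.γ r} with hK
  have hKc : IsClosed K := by
    have heq : K = (Icc 0 (min Pg.len Qg.len)) ∩
        (fun r => dist (Pg.γ r) (Qg.γ r)) ⁻¹' {0} := by
      ext r
      simp only [hK, mem_setOf_eq, mem_inter_iff, mem_preimage, mem_singleton_iff, dist_eq_zero]
    rw [heq]
    exact ContinuousOn.preimage_isClosed_of_isClosed
      (continuous_dist.comp_continuousOn
        ((Pg.continuousOn.mono (fun r hr => ⟨hr.1, le_trans hr.2 (min_le_left _ _)⟩)).prodMk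
         (Qg.continuousOn.mono (fun r hr => ⟨hr.1, le_trans hr.2 (min_le_right _ _)⟩))))
      isClosed_Icc isClosed_singleton
  have h0K : (0:ℝ) ∈ K := ⟨⟨le_refl _, le_min Pg.len_nonneg Qg.len_nonneg⟩, hz⟩
  have hKne : K.Nonempty := ⟨0, h0K⟩
  have hKb : BddAbove K := BddAbove.mono (fun r hr => hr.1) bddAbove_Icc
  have hr0 : sSup K ∈ K := hKc.csSup_mem hKne hKb
  set r0 := sSup K with hr0def
  set c := Pg.γ r0 with hc
  have hr00 : 0 ≤ r0 := hr0.1.1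
  have hrP : r0 ≤ Pg.len := le_trans hr0.1.2 (min_le_left _ _)
  have hrQ : r0 ≤ Qg.len := le_trans hr0.1.2 (min_le_right _ _)
  have hcQ : c = Qg.γ r0 := hr0.2
  refine ⟨c, Pg.mem_seg ⟨hr00, hrP⟩, by rw [hcQ]; exact Qg.mem_seg ⟨hr00, hrQ⟩, ?_⟩
  refine ⟨Pg.γ '' Icc r0 Pg.len, Qg.γ '' Icc r0 Qg.len, ?_, ?_, ?_, ?_, ?_⟩
  · have := ((Pg.portion r0 Pg.len hr00 hrP (le_refl _)).reverse).isSeg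
    simp only [Geo.reverse_src, Geo.reverse_dst, Geo.reverse_seg, Geo.portion_src,
      Geo.portion_dst, Geo.portion_seg] at this
    exact this
  · exact image_mono (fun t ht => ⟨le_trans hr00 ht.1, ht.2⟩)
  · have := (Qg.portion r0 Qg.len hr00 hrQ (le_refl _)).isSeg
    simp only [Geo.portion_src, Geo.portion_dst, Geo.portion_seg] at this
    rw [hcQ]
    exact this
  · exact image_mono (fun t ht => ⟨le_trans hr00 ht.1, ht.2⟩)
  · apply Subset.antisymm
    · rintro q ⟨⟨r, hr, rfl⟩, ⟨r', hr', hq'⟩⟩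
      have e1 : dist Pg.src (Pg.γ r) = r := Pg.dist_src ⟨le_trans hr00 hr.1, hr.2⟩
      have e2 : dist Qg.src (Qg.γ r') = r' := Qg.dist_src ⟨le_trans hr00 hr'.1, hr'.2⟩
      have hrr : r = r' := by rw [← e1, ← e2, hq', hz]
      have hrK : r ∈ K := ⟨⟨le_trans hr00 hr.1, le_min hr.2 (hrr ▸ hr'.2)⟩,
        by rw [← hq', hrr]⟩
      have : r ≤ r0 := le_csSup hKb hrK
      have : r = r0 := le_antisymm this hr.1
      rw [mem_singleton_iff, hc, this]
    · intro q hq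
      rw [mem_singleton_iff] at hq
      subst hq
      exact ⟨⟨r0, ⟨le_refl _, hrP⟩, rfl⟩, ⟨r0, ⟨le_refl _, hrQ⟩, hcQ.symm⟩⟩

open Set in
lemma Geo.subseg (H : Geo T) {p q : T} (hp : p ∈ H.seg) (hq : q ∈ H.seg) :
    ∃ s : Set T, IsGeodesicSegment s p q ∧ s ⊆ H.seg ∧ p ∈ s ∧ q ∈ s := by
  obtain ⟨hpI, hpγ⟩ := H.param_of_mem hp
  obtain ⟨hqI, hqγ⟩ := H.param_of_mem hq
  set a := dist H.src p
  set b := dist H.src q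
  rcases le_total a b with h | h
  · have hP := (H.portion a b hpI.1 h hqI.2).isSeg
    simp only [Geo.portion_src, Geo.portion_dst, Geo.portion_seg, hpγ, hqγ] at hP
    exact ⟨H.γ '' Icc a b, hP,
      image_mono (fun r hr => ⟨le_trans hpI.1 hr.1, le_trans hr.2 hqI.2⟩),
      ⟨a, ⟨le_refl _, h⟩, hpγ⟩, ⟨b, ⟨h, le_refl _⟩, hqγ⟩⟩
  · have hP := ((H.portion b a hqI.1 h hpI.2).reverse).isSeg
    simp only [Geo.reverse_src, Geo.reverse_dst, Geo.reverse_seg, Geo.portion_src,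
      Geo.portion_dst, Geo.portion_seg, hpγ, hqγ] at hP
    exact ⟨H.γ '' Icc b a, hP,
      image_mono (fun r hr => ⟨le_trans hqI.1 hr.1, le_trans hr.2 hpI.2⟩),
      ⟨a, ⟨h, le_refl _⟩, hpγ⟩, ⟨b, ⟨le_refl _, h⟩, hqγ⟩⟩

lemma seg_endpoints {s : Set T} {x y : T} (h : IsGeodesicSegment s x y) : x ∈ s ∧ y ∈ s := by
  obtain ⟨G, h1, h2, h3⟩ := exists_geo_of_seg h
  exact ⟨h3 ▸ h1 ▸ G.src_mem, h3 ▸ h2 ▸ G.dst_mem⟩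

open Set in
/-- Any geodesic between the endpoints of a geodesic lying in a piece lies in that piece. -/
lemma geo_unique_in_piece (hT : IsTreeGraded T P) {A : Set T} (hA : A ∈ P)
    (G H : Geo T) (hsrc : H.src = G.src) (hdst : H.dst = G.dst) (hGA : G.seg ⊆ A) :
    H.seg ⊆ A := by
  have hlen : H.len = G.len := by rw [← G.dist_src_dst, ← H.dist_src_dst, hsrc, hdst]
  intro p hp
  obtain ⟨t, ht, rfl⟩ := hp
  have ht' : t ∈ Icc 0 G.len := by rw [← hlen]; exact ht
  set E := {r : ℝ | r ∈ Icc 0 G.len ∧ G.γ r = H.γ r} with hE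
  have hEc : IsClosed E := by
    have heq : E = (Icc 0 G.len) ∩ (fun r => dist (G.γ r) (H.γ r)) ⁻¹' {0} := by
      ext r
      simp only [hE, mem_setOf_eq, mem_inter_iff, mem_preimage, mem_singleton_iff, dist_eq_zero]
    rw [heq]
    exact ContinuousOn.preimage_isClosed_of_isClosed
      (continuous_dist.comp_continuousOn
        ((G.continuousOn).prodMk (H.continuousOn.mono (by rw [hlen]))))
      isClosed_Icc isClosed_singleton
  have h0E : (0:ℝ) ∈ E := ⟨⟨le_refl _, G.len_nonneg⟩, hsrc.symm⟩
  have hlE : G.len ∈ E := by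
    refine ⟨⟨G.len_nonneg, le_refl _⟩, ?_⟩
    show G.dst = H.γ G.len
    rw [← hlen, ← hdst]
    rfl
  by_cases htE : t ∈ E
  · rw [← htE.2]; exact hGA (G.mem_seg ht')
  · obtain ⟨α, β, hαE, hβE, hα0, hαt, htβ, hβl, hgap⟩ := gap_lemma hEc h0E hlE ht'.1 ht'.2 htE
    have hαβ : α ≤ β := le_of_lt (lt_trans hαt htβ)
    have hxy : G.γ α ≠ G.γ β := fun h =>
      (ne_of_lt (lt_trans hαt htβ))
        (G.injOn ⟨hαE.1.1, le_trans hαβ hβE.1.2⟩ ⟨le_trans hαE.1.1 hαβ, hβE.1.2⟩ h)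
    have hsG := (G.portion α β hαE.1.1 hαβ hβE.1.2).isSeg
    simp only [Geo.portion_src, Geo.portion_dst, Geo.portion_seg] at hsG
    have hβH : β ≤ H.len := by rw [hlen]; exact hβE.1.2
    have hsH := (H.portion α β hαE.1.1 hαβ hβH).isSeg
    simp only [Geo.portion_src, Geo.portion_dst, Geo.portion_seg] at hsH
    rw [← hαE.2, ← hβE.2] at hsH
    have hint : (G.γ '' Icc α β) ∩ (H.γ '' Icc α β) = {G.γ α, G.γ β} := by
      apply Subset.antisymm
      · rintro q ⟨⟨r, hr, rfl⟩, ⟨r', hr', hq'⟩⟩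
        have hrI : r ∈ Icc 0 G.len := ⟨le_trans hαE.1.1 hr.1, le_trans hr.2 hβE.1.2⟩
        have hr'I : r' ∈ Icc 0 H.len := ⟨le_trans hαE.1.1 hr'.1, le_trans hr'.2 hβH⟩
        have e1 : dist G.src (G.γ r) = r := G.dist_src hrI
        have e2 : dist H.src (H.γ r') = r' := H.dist_src hr'I
        have hrr : r = r' := by rw [← e1, ← e2, hq', hsrc]
        have hrE : r ∈ E := ⟨hrI, by rw [← hq', hrr]⟩
        rcases eq_or_lt_of_le hr.1 with h | h
        · rw [← h]; exact Or.inl rfl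
        rcases eq_or_lt_of_le hr.2 with h2 | h2
        · rw [h2]; exact Or.inr rfl
        · exact absurd hrE (hgap r ⟨h, h2⟩)
      · intro q hq
        rcases hq with h | h
        · rw [h]
          exact ⟨⟨α, ⟨le_refl _, hαβ⟩, rfl⟩, ⟨α, ⟨le_refl _, hαβ⟩, hαE.2.symm⟩⟩
        · rw [mem_singleton_iff] at h
          rw [h]
          exact ⟨⟨β, ⟨hαβ, le_refl _⟩, rfl⟩, ⟨β, ⟨hαβ, le_refl _⟩, hβE.2.symm⟩⟩
    obtain ⟨D, hD, hDsub⟩ := bigon_piece hT hxy hsG hsH hint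
    have hxA : G.γ α ∈ A := hGA (G.mem_seg ⟨hαE.1.1, le_trans hαβ hβE.1.2⟩)
    have hyA : G.γ β ∈ A := hGA (G.mem_seg ⟨le_trans hαE.1.1 hαβ, hβE.1.2⟩)
    have hxD : G.γ α ∈ D := hDsub (Or.inl ⟨α, ⟨le_refl _, hαβ⟩, rfl⟩)
    have hyD : G.γ β ∈ D := hDsub (Or.inl ⟨β, ⟨hαβ, le_refl _⟩, rfl⟩)
    have hDA : D = A := pieces_eq hT hD hA hxD hxA hyD hyA hxy
    rw [← hDA]
    exact hDsub (Or.inr ⟨t, ⟨le_of_lt hαt, le_of_lt htβ⟩, rfl⟩)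

open Set in
/-- Bigon version of the local lemma: if the endpoints of a gap both lie on one auxiliary
geodesic, the gap lies in a piece. -/
lemma loc_big (hT : IsTreeGraded T P) (G : Geo T) {α β : ℝ} (h0 : 0 ≤ α) (hαβ : α < β)
    (hβ : β ≤ G.len) (H : Geo T) (hx : G.γ α ∈ H.seg) (hy : G.γ β ∈ H.seg)
    (hint : ∀ r ∈ Icc α β, G.γ r ∈ H.seg → r = α ∨ r = β) :
    ∃ A ∈ P, G.γ '' Icc α β ⊆ A := by
  obtain ⟨s', hs', hs'sub, hxs', hys'⟩ := H.subseg hx hy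
  have hxy : G.γ α ≠ G.γ β := fun h =>
    (ne_of_lt hαβ) (G.injOn ⟨h0, le_trans (le_of_lt hαβ) hβ⟩ ⟨le_trans h0 (le_of_lt hαβ), hβ⟩ h)
  have hsG := (G.portion α β h0 (le_of_lt hαβ) hβ).isSeg
  simp only [Geo.portion_src, Geo.portion_dst, Geo.portion_seg] at hsG
  have hintset : (G.γ '' Icc α β) ∩ s' = {G.γ α, G.γ β} := by
    apply Subset.antisymm
    · rintro q ⟨⟨r, hr, rfl⟩, hq2⟩
      rcases hint r hr (hs'sub hq2) with h | h
      · rw [h]; exact Or.inl rfl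
      · rw [h]; exact Or.inr rfl
    · intro q hq
      rcases hq with h | h
      · rw [h]; exact ⟨⟨α, ⟨le_refl _, le_of_lt hαβ⟩, rfl⟩, hxs'⟩
      · rw [mem_singleton_iff] at h
        rw [h]; exact ⟨⟨β, ⟨le_of_lt hαβ, le_refl _⟩, rfl⟩, hys'⟩
  obtain ⟨A, hA, hsub⟩ := bigon_piece hT hxy hsG hs' hintset
  exact ⟨A, hA, fun q hq => hsub (Or.inl hq)⟩

open Set in
/-- Triangle version of the local lemma: a gap crossed by two auxiliary geodesics from a
common vertex lies in a piece. -/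
lemma loc_tri (hT : IsTreeGraded T P) (G : Geo T) {α β : ℝ} (h0 : 0 ≤ α) (hαβ : α < β)
    (hβ : β ≤ G.len) (W V : Geo T) (hWd : W.dst = G.γ α) (hVd : V.dst = G.γ β)
    (hzz : W.src = V.src)
    (hWint : ∀ r ∈ Icc α β, G.γ r ∈ W.seg → r = α)
    (hVint : ∀ r ∈ Icc α β, G.γ r ∈ V.seg → r = β)
    (hxV : G.γ α ∉ V.seg) (hyW : G.γ β ∉ W.seg) :
    ∃ A ∈ P, G.γ '' Icc α β ⊆ A := by
  obtain ⟨c, hcW, hcV, sP, sQ, hsP, hsPsub, hsQ, hsQsub, hPQ⟩ := corner W V hzz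
  rw [hWd] at hsP
  rw [hVd] at hsQ
  have hxy : G.γ α ≠ G.γ β := fun h =>
    (ne_of_lt hαβ) (G.injOn ⟨h0, le_trans (le_of_lt hαβ) hβ⟩ ⟨le_trans h0 (le_of_lt hαβ), hβ⟩ h)
  have hxc : G.γ α ≠ c := fun h => hxV (h ▸ hcV)
  have hcy : c ≠ G.γ β := fun h => hyW (h ▸ hcW)
  have hsG := ((G.portion α β h0 (le_of_lt hαβ) hβ).reverse).isSeg
  simp only [Geo.reverse_src, Geo.reverse_dst, Geo.reverse_seg, Geo.portion_src,
    Geo.portion_dst, Geo.portion_seg] at hsG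
  have hx_mem : G.γ α ∈ G.γ '' Icc α β := ⟨α, ⟨le_refl _, le_of_lt hαβ⟩, rfl⟩
  have hy_mem : G.γ β ∈ G.γ '' Icc α β := ⟨β, ⟨le_of_lt hαβ, le_refl _⟩, rfl⟩
  have hi23 : sQ ∩ (G.γ '' Icc α β) = {G.γ β} := by
    apply Subset.antisymm
    · rintro q ⟨hq1, r, hr, rfl⟩
      rw [mem_singleton_iff, hVint r hr (hsQsub hq1)]
    · intro q hq
      rw [mem_singleton_iff] at hq
      rw [hq]
      exact ⟨(seg_endpoints hsQ).2, hy_mem⟩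
  have hi31 : (G.γ '' Icc α β) ∩ sP = {G.γ α} := by
    apply Subset.antisymm
    · rintro q ⟨⟨r, hr, rfl⟩, hq2⟩
      rw [mem_singleton_iff, hWint r hr (hsPsub hq2)]
    · intro q hq
      rw [mem_singleton_iff] at hq
      rw [hq]
      exact ⟨hx_mem, (seg_endpoints hsP).1⟩
  obtain ⟨A, hAP, hSA⟩ := hT.triangle_in_piece (sP ∪ sQ ∪ (G.γ '' Icc α β))
    ⟨G.γ α, c, G.γ β, sP, sQ, G.γ '' Icc α β, hxc, hcy, hxy, hsP, hsQ, hsG, hPQ, hi23, hi31, rfl⟩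
  exact ⟨A, hAP, fun q hq => hSA (Or.inr hq)⟩

open Set in
/-- Transfer lemma: `G` and `H` are geodesics with the same endpoint `G.dst = H.dst`,
passing through a common interior point `m`; `τ` joins their starting points avoiding `m`.
If a piece contains a neighborhood of `m` along `H`, it contains one along `G`. -/
lemma transfer (hT : IsTreeGraded T P) {A : Set T} (hA : A ∈ P)
    (G H τ : Geo T) (hv : H.dst = G.dst) (hτs : τ.src = G.src) (hτd : τ.dst = H.src)
    {t₀ s₀ : ℝ} (ht₀ : t₀ ∈ Ioo 0 G.len) (hs₀ : s₀ ∈ Ioo 0 H.len)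
    (hpt : H.γ s₀ = G.γ t₀) (hmτ : G.γ t₀ ∉ τ.seg)
    {s₁ s₂ : ℝ} (hs₁0 : 0 ≤ s₁) (hs₁ : s₁ < s₀) (hs₂ : s₀ < s₂) (hs₂l : s₂ ≤ H.len)
    (hseg : H.γ '' Icc s₁ s₂ ⊆ A) :
    ∃ t₁ t₂, 0 ≤ t₁ ∧ t₁ < t₀ ∧ t₀ < t₂ ∧ t₂ ≤ G.len ∧ G.γ '' Icc t₁ t₂ ⊆ A := by
  have hrm_eq : G.len - t₀ = H.len - s₀ := by
    have h1 : dist (G.γ t₀) G.dst = G.len - t₀ := G.dist_dst ⟨le_of_lt ht₀.1, le_of_lt ht₀.2⟩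
    have h2 : dist (H.γ s₀) H.dst = H.len - s₀ := H.dist_dst ⟨le_of_lt hs₀.1, le_of_lt hs₀.2⟩
    rw [← h1, ← h2, hpt, hv]
  set M := {r : ℝ | r ∈ Icc 0 (min G.len H.len) ∧ G.γ (G.len - r) = H.γ (H.len - r)} with hM
  have hMc : IsClosed M := by
    have heq : M = (Icc 0 (min G.len H.len)) ∩
        (fun r => dist (G.γ (G.len - r)) (H.γ (H.len - r))) ⁻¹' {0} := by
      ext r
      simp only [hM, mem_setOf_eq, mem_inter_iff, mem_preimage, mem_singleton_iff, dist_eq_zero]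
    rw [heq]
    refine ContinuousOn.preimage_isClosed_of_isClosed
      (continuous_dist.comp_continuousOn (ContinuousOn.prodMk ?_ ?_)) isClosed_Icc
      isClosed_singleton
    · exact G.continuousOn.comp (continuous_const.sub continuous_id).continuousOn
        (fun r hr => ⟨by linarith [hr.2, min_le_left G.len H.len], by linarith [hr.1]⟩)
    · exact H.continuousOn.comp (continuous_const.sub continuous_id).continuousOn
        (fun r hr => ⟨by linarith [hr.2, min_le_right G.len H.len], by linarith [hr.1]⟩)
  have hel : 0 ≤ G.len := G.len_nonneg
  have hll : 0 ≤ H.len := H.len_nonneg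
  have h0M : (0:ℝ) ∈ M := by
    refine ⟨⟨le_refl _, le_min hel hll⟩, ?_⟩
    rw [sub_zero, sub_zero]
    show G.dst = H.dst
    rw [hv]
  have hrm0 : 0 < G.len - t₀ := by linarith [ht₀.2]
  have hrmR : G.len - t₀ < min G.len H.len := by
    rw [lt_min_iff]
    constructor
    · linarith [ht₀.1]
    · rw [hrm_eq]; linarith [hs₀.1]
  have hrmM : G.len - t₀ ∈ M := by
    refine ⟨⟨le_of_lt hrm0, le_of_lt hrmR⟩, ?_⟩
    have h1 : G.len - (G.len - t₀) = t₀ := by ring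
    have h2 : H.len - (G.len - t₀) = s₀ := by rw [hrm_eq]; ring
    rw [h1, h2, hpt]
  -- generic bigon for a gap of M
  have bigap : ∀ α β : ℝ, α ∈ M → β ∈ M → α < β → (∀ r ∈ Ioo α β, r ∉ M) →
      ∃ D ∈ P, G.γ '' Icc (G.len - β) (G.len - α) ⊆ D ∧
        H.γ '' Icc (H.len - β) (H.len - α) ⊆ D := by
    intro α β hα hβ hαβ hgap
    have hα0 : 0 ≤ α := hα.1.1
    have hβe : β ≤ G.len := le_trans hβ.1.2 (min_le_left _ _)
    have hβl : β ≤ H.len := le_trans hβ.1.2 (min_le_right _ _)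
    have hGb : G.len - β ∈ Icc 0 G.len := ⟨by linarith, by linarith⟩
    have hGa : G.len - α ∈ Icc 0 G.len := ⟨by linarith, by linarith⟩
    have hHb : H.len - β ∈ Icc 0 H.len := ⟨by linarith, by linarith⟩
    have hHa : H.len - α ∈ Icc 0 H.len := ⟨by linarith, by linarith⟩
    have hGord : G.len - β ≤ G.len - α := by linarith
    have hHord : H.len - β ≤ H.len - α := by linarith
    have hxy : G.γ (G.len - β) ≠ G.γ (G.len - α) := fun h =>
      (ne_of_lt hαβ) (by have := G.injOn hGb hGa h; linarith)
    have hsG := (G.portion (G.len - β) (G.len - α) hGb.1 hGord hGa.2).isSeg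
    simp only [Geo.portion_src, Geo.portion_dst, Geo.portion_seg] at hsG
    have hsH := (H.portion (H.len - β) (H.len - α) hHb.1 hHord hHa.2).isSeg
    simp only [Geo.portion_src, Geo.portion_dst, Geo.portion_seg] at hsH
    rw [← hα.2, ← hβ.2] at hsH
    have hint : (G.γ '' Icc (G.len - β) (G.len - α)) ∩ (H.γ '' Icc (H.len - β) (H.len - α)) =
        {G.γ (G.len - β), G.γ (G.len - α)} := by
      apply Subset.antisymm
      · rintro q ⟨⟨w, hw, rfl⟩, ⟨w', hw', hq'⟩⟩
        have hwI : w ∈ Icc 0 G.len := ⟨le_trans hGb.1 hw.1, le_trans hw.2 hGa.2⟩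
        have hw'I : w' ∈ Icc 0 H.len := ⟨le_trans hHb.1 hw'.1, le_trans hw'.2 hHa.2⟩
        have e1 : dist (G.γ w) G.dst = G.len - w := G.dist_dst hwI
        have e2 : dist (H.γ w') H.dst = H.len - w' := H.dist_dst hw'I
        have hrr : G.len - w = H.len - w' := by rw [← e1, ← e2, hq', hv]
        have hρab : G.len - w ∈ Icc α β := ⟨by linarith [hw.2], by linarith [hw.1]⟩
        have hρM : G.len - w ∈ M := by
          refine ⟨⟨le_trans hα0 hρab.1, le_trans hρab.2 hβ.1.2⟩, ?_⟩
          have hw_eq : G.len - (G.len - w) = w := by ring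
          have hw'_eq : H.len - (G.len - w) = w' := by rw [hrr]; ring
          rw [hw_eq, hw'_eq, hq']
        rcases eq_or_lt_of_le hρab.1 with h | h
        · have : w = G.len - α := by linarith
          rw [this]; exact Or.inr rfl
        rcases eq_or_lt_of_le hρab.2 with h2 | h2
        · have : w = G.len - β := by linarith
          rw [this]; exact Or.inl rfl
        · exact absurd hρM (hgap _ ⟨h, h2⟩)
      · intro q hq
        rcases hq with h | h
        · rw [h]
          exact ⟨⟨G.len - β, ⟨le_refl _, hGord⟩, rfl⟩,
            ⟨H.len - β, ⟨le_refl _, hHord⟩, hβ.2.symm⟩⟩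
        · rw [mem_singleton_iff] at h
          rw [h]
          exact ⟨⟨G.len - α, ⟨hGord, le_refl _⟩, rfl⟩,
            ⟨H.len - α, ⟨hHord, le_refl _⟩, hα.2.symm⟩⟩
    obtain ⟨D, hD, hsub⟩ := bigon_piece hT hxy hsG hsH hint
    exact ⟨D, hD, fun q hq => hsub (Or.inl hq), fun q hq => hsub (Or.inr hq)⟩
  -- fill lemma
  have fill : ∀ ra rb : ℝ, ra ∈ M → rb ∈ M → ra ≤ rb → s₁ ≤ H.len - rb → H.len - ra ≤ s₂ →
      G.γ '' Icc (G.len - rb) (G.len - ra) ⊆ A := by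
    intro ra rb hraM hrbM hrab hs1b hs2a
    rintro q ⟨t, ht, rfl⟩
    have hra0 : 0 ≤ ra := hraM.1.1
    have hrbe : rb ≤ G.len := le_trans hrbM.1.2 (min_le_left _ _)
    have hrbl : rb ≤ H.len := le_trans hrbM.1.2 (min_le_right _ _)
    have hrI : G.len - t ∈ Icc ra rb := ⟨by linarith [ht.2], by linarith [ht.1]⟩
    have ht_eq : G.len - (G.len - t) = t := by ring
    by_cases hrM : G.len - t ∈ M
    · have : G.γ t = H.γ (H.len - (G.len - t)) := by
        have h2 := hrM.2
        rw [ht_eq] at h2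
        exact h2
      rw [this]
      apply hseg
      exact ⟨H.len - (G.len - t), ⟨by linarith [hrI.2], by linarith [hrI.1]⟩, rfl⟩
    · obtain ⟨α, β, hαM, hβM, hα_ra, hαr, hrβ, hβ_rb, hgap⟩ :=
        gap_lemma hMc hraM hrbM hrI.1 hrI.2 hrM
      obtain ⟨D, hD, hDG, hDH⟩ := bigap α β hαM hβM (lt_trans hαr hrβ) hgap
      have hβl : β ≤ H.len := le_trans hβM.1.2 (min_le_right _ _)
      have hp1 : H.γ (H.len - β) ∈ D := hDH ⟨H.len - β, ⟨le_refl _, by linarith⟩, rfl⟩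
      have hp2 : H.γ (H.len - α) ∈ D := hDH ⟨H.len - α, ⟨by linarith, le_refl _⟩, rfl⟩
      have hq1 : H.γ (H.len - β) ∈ A := hseg ⟨H.len - β, ⟨by linarith, by linarith⟩, rfl⟩
      have hq2 : H.γ (H.len - α) ∈ A := hseg ⟨H.len - α, ⟨by linarith, by linarith⟩, rfl⟩
      have hαl : α ≤ H.len := le_trans hαM.1.2 (min_le_right _ _)
      have hne : H.γ (H.len - β) ≠ H.γ (H.len - α) := fun h => by
        have h2 := H.injOn ⟨by linarith, by linarith⟩ ⟨by linarith [hαM.1.1], by linarith⟩ h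
        have : α = β := by linarith
        exact (ne_of_lt (lt_trans hαr hrβ)) this
      have hDA : D = A := pieces_eq hT hD hA hp1 hq1 hp2 hq2 hne
      rw [← hDA]
      exact hDG ⟨t, ⟨by linarith, by linarith⟩, rfl⟩
  -- Part 1: there is t₂ > t₀ with G.γ '' Icc t₀ t₂ ⊆ A
  have part1 : ∃ t₂, t₀ < t₂ ∧ t₂ ≤ G.len ∧ G.γ '' Icc t₀ t₂ ⊆ A := by
    by_cases hex : ∃ r ∈ M, max (H.len - s₂) 0 ≤ r ∧ r < G.len - t₀
    · obtain ⟨ra, hraM, hra1, hra2⟩ := hex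
      have hfill := fill ra (G.len - t₀) hraM hrmM (le_of_lt hra2)
        (by rw [hrm_eq] at hra2 ⊢; linarith)
        (by linarith [le_trans (le_max_left (H.len - s₂) 0) hra1])
      refine ⟨G.len - ra, by linarith, by linarith [hraM.1.1], ?_⟩
      have hrmt : G.len - (G.len - t₀) = t₀ := by ring
      rw [← hrmt]
      exact hfill
    · push_neg at hex
      have hne : (M ∩ Icc 0 (max (H.len - s₂) 0)).Nonempty :=
        ⟨0, h0M, le_refl _, le_max_right _ _⟩
      have hcl : IsClosed (M ∩ Icc 0 (max (H.len - s₂) 0)) := hMc.inter isClosed_Icc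
      have hbdd : BddAbove (M ∩ Icc 0 (max (H.len - s₂) 0)) :=
        BddAbove.mono inter_subset_right bddAbove_Icc
      have hαmem : sSup (M ∩ Icc 0 (max (H.len - s₂) 0)) ∈ M ∩ Icc 0 (max (H.len - s₂) 0) :=
        hcl.csSup_mem hne hbdd
      have hmax_rm : max (H.len - s₂) 0 < G.len - t₀ := by
        rw [max_lt_iff]
        exact ⟨by rw [hrm_eq]; linarith, hrm0⟩
      have hαrm : sSup (M ∩ Icc 0 (max (H.len - s₂) 0)) < G.len - t₀ :=
        lt_of_le_of_lt hαmem.2.2 hmax_rm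
      have hgap : ∀ r ∈ Ioo (sSup (M ∩ Icc 0 (max (H.len - s₂) 0))) (G.len - t₀), r ∉ M := by
        intro r hr hrM
        rcases le_or_gt r (max (H.len - s₂) 0) with h | h
        · have hr0 : 0 ≤ r := le_trans hαmem.2.1 (le_of_lt hr.1)
          have : r ≤ sSup (M ∩ Icc 0 (max (H.len - s₂) 0)) := le_csSup hbdd ⟨hrM, hr0, h⟩
          linarith [hr.1]
        · exact absurd hr.2 (not_lt.2 (hex r hrM (le_of_lt h)))
      obtain ⟨D, hD, hDG, hDH⟩ :=
        bigap _ _ hαmem.1 hrmM hαrm hgap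
      have hls0 : H.len - (G.len - t₀) = s₀ := by rw [hrm_eq]; ring
      have hlα : s₀ < H.len - sSup (M ∩ Icc 0 (max (H.len - s₂) 0)) := by
        rw [← hls0]; linarith
      have hw2s0 : s₀ < min s₂ (H.len - sSup (M ∩ Icc 0 (max (H.len - s₂) 0))) :=
        lt_min hs₂ hlα
      have hp1 : H.γ s₀ ∈ D := hDH ⟨s₀, ⟨le_of_eq hls0, by linarith⟩, rfl⟩
      have hp2 : H.γ (min s₂ (H.len - sSup (M ∩ Icc 0 (max (H.len - s₂) 0)))) ∈ D :=
        hDH ⟨_, ⟨by rw [hls0]; exact le_of_lt hw2s0, min_le_right _ _⟩, rfl⟩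
      have hq1 : H.γ s₀ ∈ A := hseg ⟨s₀, ⟨le_of_lt hs₁, le_of_lt hs₂⟩, rfl⟩
      have hq2 : H.γ (min s₂ (H.len - sSup (M ∩ Icc 0 (max (H.len - s₂) 0)))) ∈ A :=
        hseg ⟨_, ⟨by linarith, min_le_left _ _⟩, rfl⟩
      have hw2l : min s₂ (H.len - sSup (M ∩ Icc 0 (max (H.len - s₂) 0))) ≤ H.len :=
        le_trans (min_le_left _ _) hs₂l
      have hne2 : H.γ s₀ ≠ H.γ (min s₂ (H.len - sSup (M ∩ Icc 0 (max (H.len - s₂) 0)))) :=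
        fun h => by
        have := H.injOn ⟨le_of_lt hs₀.1, le_of_lt hs₀.2⟩ ⟨by linarith [hs₀.1], hw2l⟩ h
        linarith
      have hDA : D = A := pieces_eq hT hD hA hp1 hq1 hp2 hq2 hne2
      refine ⟨G.len - sSup (M ∩ Icc 0 (max (H.len - s₂) 0)), by linarith,
        by linarith [hαmem.2.1], ?_⟩
      have hrmt : G.len - (G.len - t₀) = t₀ := by ring
      rw [← hDA, ← hrmt]
      exact hDG
  -- Part 2: there is t₁ < t₀ with G.γ '' Icc t₁ t₀ ⊆ A
  have part2 : ∃ t₁, 0 ≤ t₁ ∧ t₁ < t₀ ∧ G.γ '' Icc t₁ t₀ ⊆ A := by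
    have hrmt : G.len - (G.len - t₀) = t₀ := by ring
    have hls0 : H.len - (G.len - t₀) = s₀ := by rw [hrm_eq]; ring
    by_cases hex : ∃ r ∈ M, G.len - t₀ < r
    · by_cases hex2 : ∃ r ∈ M, G.len - t₀ < r ∧ r ≤ H.len - s₁
      · obtain ⟨rb, hrbM, h1, h2⟩ := hex2
        have hfill := fill (G.len - t₀) rb hrmM hrbM (le_of_lt h1)
          (by linarith) (by rw [hls0]; linarith)
        refine ⟨G.len - rb, ?_, by linarith, ?_⟩
        · have : rb ≤ G.len := le_trans hrbM.1.2 (min_le_left _ _)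
          linarith
        · rw [← hrmt]
          exact hfill
      · push_neg at hex2
        obtain ⟨rc, hrcM, hrc⟩ := hex
        have hrcU : H.len - s₁ < rc := lt_of_not_ge (fun h => absurd (hex2 rc hrcM hrc) (not_lt.2 h))
        have hUrm : G.len - t₀ < H.len - s₁ := by rw [hrm_eq]; linarith
        have hne : (M ∩ Icc (H.len - s₁) (min G.len H.len)).Nonempty :=
          ⟨rc, hrcM, le_of_lt hrcU, hrcM.1.2⟩
        have hcl : IsClosed (M ∩ Icc (H.len - s₁) (min G.len H.len)) := hMc.inter isClosed_Icc
        have hbdd : BddBelow (M ∩ Icc (H.len - s₁) (min G.len H.len)) :=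
          BddBelow.mono inter_subset_right bddBelow_Icc
        have hβmem : sInf (M ∩ Icc (H.len - s₁) (min G.len H.len)) ∈
            M ∩ Icc (H.len - s₁) (min G.len H.len) := hcl.csInf_mem hne hbdd
        set β := sInf (M ∩ Icc (H.len - s₁) (min G.len H.len)) with hβ
        have hβU : H.len - s₁ < β := by
          rcases eq_or_lt_of_le hβmem.2.1 with h | h
          · exfalso
            exact absurd (le_of_eq h.symm) (not_le.2 (hex2 β hβmem.1 (h ▸ hUrm)))
          · exact h
        have hrmβ : G.len - t₀ < β := lt_trans hUrm hβU
        have hgap : ∀ r ∈ Ioo (G.len - t₀) β, r ∉ M := by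
          intro r hr hrM
          rcases le_or_gt r (H.len - s₁) with h | h
          · exact absurd h (not_le.2 (hex2 r hrM hr.1))
          · have : β ≤ r := csInf_le hbdd ⟨hrM, le_of_lt h, hrM.1.2⟩
            linarith [hr.2]
        obtain ⟨D, hD, hDG, hDH⟩ := bigap _ _ hrmM hβmem.1 hrmβ hgap
        have hβl : β ≤ H.len := le_trans hβmem.1.1.2 (min_le_right _ _)
        have hp1 : H.γ s₁ ∈ D := hDH ⟨s₁, ⟨by linarith, by rw [hls0]; linarith⟩, rfl⟩
        have hp2 : H.γ s₀ ∈ D := hDH ⟨s₀, ⟨by linarith, le_of_eq hls0.symm⟩, rfl⟩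
        have hq1 : H.γ s₁ ∈ A := hseg ⟨s₁, ⟨le_refl _, by linarith⟩, rfl⟩
        have hq2 : H.γ s₀ ∈ A := hseg ⟨s₀, ⟨le_of_lt hs₁, le_of_lt hs₂⟩, rfl⟩
        have hne2 : H.γ s₁ ≠ H.γ s₀ := fun h => by
          have := H.injOn ⟨hs₁0, by linarith⟩ ⟨le_of_lt hs₀.1, le_of_lt hs₀.2⟩ h
          linarith
        have hDA : D = A := pieces_eq hT hD hA hp1 hq1 hp2 hq2 hne2
        refine ⟨G.len - β, ?_, by linarith, ?_⟩
        · have : β ≤ G.len := le_trans hβmem.1.1.2 (min_le_left _ _)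
          linarith
        · rw [← hDA, ← hrmt]
          exact hDG
    · -- triangle case: no common point beyond G.len - t₀
      push_neg at hex
      set Tg := {t : ℝ | t ∈ Icc 0 t₀ ∧ G.γ t ∈ τ.seg} with hTg
      have hTgc : IsClosed Tg := by
        have heq : Tg = Icc 0 t₀ ∩ G.γ ⁻¹' τ.seg := by
          ext r; simp only [hTg, mem_setOf_eq, mem_inter_iff, mem_preimage]
        rw [heq]
        exact ContinuousOn.preimage_isClosed_of_isClosed
          (G.continuousOn.mono (fun r hr => ⟨hr.1, le_trans hr.2 (le_of_lt ht₀.2)⟩))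
          isClosed_Icc τ.isClosed_seg
      have h0Tg : (0:ℝ) ∈ Tg := by
        refine ⟨⟨le_refl _, le_of_lt ht₀.1⟩, ?_⟩
        show G.src ∈ τ.seg
        rw [← hτs]
        exact τ.src_mem
      have hTgne : Tg.Nonempty := ⟨0, h0Tg⟩
      have hTgbdd : BddAbove Tg := BddAbove.mono (fun r hr => hr.1) bddAbove_Icc
      have ht1mem : sSup Tg ∈ Tg := hTgc.csSup_mem hTgne hTgbdd
      set t1s := sSup Tg with ht1s
      have ht1lt : t1s < t₀ := lt_of_le_of_ne ht1mem.1.2 (fun h => hmτ (h ▸ ht1mem.2))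
      set Sh := {s : ℝ | s ∈ Icc 0 s₀ ∧ H.γ s ∈ τ.seg} with hSh
      have hShc : IsClosed Sh := by
        have heq : Sh = Icc 0 s₀ ∩ H.γ ⁻¹' τ.seg := by
          ext r; simp only [hSh, mem_setOf_eq, mem_inter_iff, mem_preimage]
        rw [heq]
        exact ContinuousOn.preimage_isClosed_of_isClosed
          (H.continuousOn.mono (fun r hr => ⟨hr.1, le_trans hr.2 (le_of_lt hs₀.2)⟩))
          isClosed_Icc τ.isClosed_seg
      have h0Sh : (0:ℝ) ∈ Sh := by
        refine ⟨⟨le_refl _, le_of_lt hs₀.1⟩, ?_⟩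
        show H.src ∈ τ.seg
        rw [← hτd]
        exact τ.dst_mem
      have hShne : Sh.Nonempty := ⟨0, h0Sh⟩
      have hShbdd : BddAbove Sh := BddAbove.mono (fun r hr => hr.1) bddAbove_Icc
      have hs1mem : sSup Sh ∈ Sh := hShc.csSup_mem hShne hShbdd
      set s1s := sSup Sh with hs1sdef
      have hs1lt : s1s < s₀ := by
        refine lt_of_le_of_ne hs1mem.1.2 (fun h => hmτ ?_)
        rw [← hpt, ← h]
        exact hs1mem.2
      have ht1I : t1s ∈ Icc 0 G.len := ⟨ht1mem.1.1, le_trans ht1mem.1.2 (le_of_lt ht₀.2)⟩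
      have hs1I : s1s ∈ Icc 0 H.len := ⟨hs1mem.1.1, le_trans hs1mem.1.2 (le_of_lt hs₀.2)⟩
      have hcommon : ∀ p : T, p ∈ G.γ '' Icc t1s t₀ → p ∈ H.γ '' Icc s1s s₀ → p = G.γ t₀ := by
        rintro p ⟨t, ht, rfl⟩ ⟨s, hs, hps⟩
        have htI : t ∈ Icc 0 G.len := ⟨le_trans ht1I.1 ht.1, le_trans ht.2 (le_of_lt ht₀.2)⟩
        have hsI : s ∈ Icc 0 H.len := ⟨le_trans hs1I.1 hs.1, le_trans hs.2 (le_of_lt hs₀.2)⟩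
        have e1 : dist (G.γ t) G.dst = G.len - t := G.dist_dst htI
        have e2 : dist (H.γ s) H.dst = H.len - s := H.dist_dst hsI
        have hrr : G.len - t = H.len - s := by rw [← e1, ← e2, hps, hv]
        have hρM : G.len - t ∈ M := by
          refine ⟨⟨by linarith [htI.2], le_min (by linarith [htI.1])
            (by rw [hrr]; linarith [hsI.1])⟩, ?_⟩
          have h1 : G.len - (G.len - t) = t := by ring
          have h2 : H.len - (G.len - t) = s := by rw [hrr]; ring
          rw [h1, h2, hps]
        have hρrm : G.len - t ≤ G.len - t₀ := hex _ hρM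
        have ht0 : t = t₀ := le_antisymm ht.2 (by linarith)
        rw [ht0]
      have hx12 : G.γ t1s ≠ H.γ s1s := by
        intro h
        have hh := hcommon (G.γ t1s) ⟨t1s, ⟨le_refl _, le_of_lt ht1lt⟩, rfl⟩
          (by rw [h]; exact ⟨s1s, ⟨le_refl _, le_of_lt hs1lt⟩, rfl⟩)
        have := G.injOn ht1I ⟨le_of_lt ht₀.1, le_of_lt ht₀.2⟩ hh
        linarith
      have hx2m : H.γ s1s ≠ G.γ t₀ := by
        intro h
        rw [← hpt] at h
        have := H.injOn hs1I ⟨le_of_lt hs₀.1, le_of_lt hs₀.2⟩ h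
        linarith
      have hx1m : G.γ t1s ≠ G.γ t₀ := by
        intro h
        have := G.injOn ht1I ⟨le_of_lt ht₀.1, le_of_lt ht₀.2⟩ h
        linarith
      obtain ⟨sτ, hsτ, hsτsub, hx1sτ, hx2sτ⟩ := τ.subseg ht1mem.2 hs1mem.2
      have hshseg := (H.portion s1s s₀ hs1I.1 (le_of_lt hs1lt) (le_of_lt hs₀.2)).isSeg
      simp only [Geo.portion_src, Geo.portion_dst, Geo.portion_seg] at hshseg
      rw [hpt] at hshseg
      have hsgseg := ((G.portion t1s t₀ ht1I.1 (le_of_lt ht1lt) (le_of_lt ht₀.2)).reverse).isSeg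
      simp only [Geo.reverse_src, Geo.reverse_dst, Geo.reverse_seg, Geo.portion_src,
        Geo.portion_dst, Geo.portion_seg] at hsgseg
      have hi12 : sτ ∩ (H.γ '' Icc s1s s₀) = {H.γ s1s} := by
        apply Subset.antisymm
        · rintro q ⟨hq1, s, hs, rfl⟩
          have hsmem : s ∈ Sh := ⟨⟨le_trans hs1I.1 hs.1, hs.2⟩, hsτsub hq1⟩
          have h1 : s ≤ s1s := le_csSup hShbdd hsmem
          have h2 : s = s1s := le_antisymm h1 hs.1
          rw [mem_singleton_iff, h2]
        · intro q hq
          rw [mem_singleton_iff] at hq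
          rw [hq]
          exact ⟨hx2sτ, ⟨s1s, ⟨le_refl _, le_of_lt hs1lt⟩, rfl⟩⟩
      have hi23 : (H.γ '' Icc s1s s₀) ∩ (G.γ '' Icc t1s t₀) = {G.γ t₀} := by
        apply Subset.antisymm
        · rintro q ⟨hq1, hq2⟩
          rw [mem_singleton_iff]
          exact hcommon q hq2 hq1
        · intro q hq
          rw [mem_singleton_iff] at hq
          rw [hq]
          exact ⟨⟨s₀, ⟨le_of_lt hs1lt, le_refl _⟩, hpt⟩, ⟨t₀, ⟨le_of_lt ht1lt, le_refl _⟩, rfl⟩⟩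
      have hi31 : (G.γ '' Icc t1s t₀) ∩ sτ = {G.γ t1s} := by
        apply Subset.antisymm
        · rintro q ⟨⟨t, ht, rfl⟩, hq2⟩
          have htmem : t ∈ Tg := ⟨⟨le_trans ht1I.1 ht.1, ht.2⟩, hsτsub hq2⟩
          have h1 : t ≤ t1s := le_csSup hTgbdd htmem
          have h2 : t = t1s := le_antisymm h1 ht.1
          rw [mem_singleton_iff, h2]
        · intro q hq
          rw [mem_singleton_iff] at hq
          rw [hq]
          exact ⟨⟨t1s, ⟨le_refl _, le_of_lt ht1lt⟩, rfl⟩, hx1sτ⟩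
      obtain ⟨D, hD, hsub⟩ := hT.triangle_in_piece
        (sτ ∪ (H.γ '' Icc s1s s₀) ∪ (G.γ '' Icc t1s t₀))
        ⟨G.γ t1s, H.γ s1s, G.γ t₀, sτ, H.γ '' Icc s1s s₀, G.γ '' Icc t1s t₀, hx12, hx2m, hx1m,
          hsτ, hshseg, hsgseg, hi12, hi23, hi31, rfl⟩
      have hw1lt : max s1s s₁ < s₀ := max_lt hs1lt hs₁
      have hp1 : H.γ (max s1s s₁) ∈ D :=
        hsub (Or.inl (Or.inr ⟨max s1s s₁, ⟨le_max_left _ _, le_of_lt hw1lt⟩, rfl⟩))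
      have hp2 : H.γ s₀ ∈ D := hsub (Or.inl (Or.inr ⟨s₀, ⟨le_of_lt hs1lt, le_refl _⟩, rfl⟩))
      have hq1 : H.γ (max s1s s₁) ∈ A := hseg ⟨max s1s s₁, ⟨le_max_right _ _, by linarith⟩, rfl⟩
      have hq2 : H.γ s₀ ∈ A := hseg ⟨s₀, ⟨le_of_lt hs₁, le_of_lt hs₂⟩, rfl⟩
      have hne2 : H.γ (max s1s s₁) ≠ H.γ s₀ := fun h => by
        have := H.injOn ⟨le_trans hs1I.1 (le_max_left _ _), by linarith [hs₀.2]⟩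
          ⟨le_of_lt hs₀.1, le_of_lt hs₀.2⟩ h
        linarith
      have hDA : D = A := pieces_eq hT hD hA hp1 hq1 hp2 hq2 hne2
      refine ⟨t1s, ht1I.1, ht1lt, ?_⟩
      rw [← hDA]
      intro q hq
      exact hsub (Or.inr hq)
  obtain ⟨t₂, ht₂a, ht₂b, hsub2⟩ := part1
  obtain ⟨t₁, ht₁a, ht₁b, hsub1⟩ := part2
  refine ⟨t₁, t₂, ht₁a, ht₁b, ht₂a, ht₂b, ?_⟩
  rintro q ⟨t, ht, rfl⟩
  rcases le_total t t₀ with h | h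
  · exact hsub1 ⟨t, ⟨ht.1, h⟩, rfl⟩
  · exact hsub2 ⟨t, ⟨h, ht.2⟩, rfl⟩

open Set in
/-- The two-segment local lemma. -/
lemma loc2 (hT : IsTreeGraded T P) (G τ₁ τ₂ : Geo T) (hj1 : τ₁.src = G.src)
    (hj : τ₂.src = τ₁.dst) (hj2 : τ₂.dst = G.dst) {t₀ : ℝ} (ht₀ : t₀ ∈ Ioo 0 G.len)
    (hm1 : G.γ t₀ ∉ τ₁.seg) (hm2 : G.γ t₀ ∉ τ₂.seg) :
    ∃ A ∈ P, ∃ t₁ t₂, 0 ≤ t₁ ∧ t₁ < t₀ ∧ t₀ < t₂ ∧ t₂ ≤ G.len ∧ G.γ '' Icc t₁ t₂ ⊆ A := by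
  set S₁ := {t : ℝ | t ∈ Icc 0 G.len ∧ G.γ t ∈ τ₁.seg} with hS₁
  set S₂ := {t : ℝ | t ∈ Icc 0 G.len ∧ G.γ t ∈ τ₂.seg} with hS₂
  have hS₁c : IsClosed S₁ := by
    have heq : S₁ = Icc 0 G.len ∩ G.γ ⁻¹' τ₁.seg := by
      ext r; simp only [hS₁, mem_setOf_eq, mem_inter_iff, mem_preimage]
    rw [heq]
    exact ContinuousOn.preimage_isClosed_of_isClosed G.continuousOn isClosed_Icc τ₁.isClosed_seg
  have hS₂c : IsClosed S₂ := by
    have heq : S₂ = Icc 0 G.len ∩ G.γ ⁻¹' τ₂.seg := by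
      ext r; simp only [hS₂, mem_setOf_eq, mem_inter_iff, mem_preimage]
    rw [heq]
    exact ContinuousOn.preimage_isClosed_of_isClosed G.continuousOn isClosed_Icc τ₂.isClosed_seg
  have h0 : (0:ℝ) ∈ S₁ ∪ S₂ := Or.inl ⟨⟨le_refl _, G.len_nonneg⟩, by
    show G.src ∈ τ₁.seg
    rw [← hj1]; exact τ₁.src_mem⟩
  have hl : G.len ∈ S₁ ∪ S₂ := Or.inr ⟨⟨G.len_nonneg, le_refl _⟩, by
    show G.dst ∈ τ₂.seg
    rw [← hj2]; exact τ₂.dst_mem⟩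
  have hm : t₀ ∉ S₁ ∪ S₂ := by
    rintro (h | h)
    · exact hm1 h.2
    · exact hm2 h.2
  obtain ⟨α, β, hαm, hβm, hα0, hαt, htβ, hβl, hgap⟩ :=
    gap_lemma (hS₁c.union hS₂c) h0 hl (le_of_lt ht₀.1) (le_of_lt ht₀.2) hm
  have hαI : α ∈ Icc 0 G.len := (by rcases hαm with h | h <;> exact h.1)
  have hβI : β ∈ Icc 0 G.len := (by rcases hβm with h | h <;> exact h.1)
  have hαβ : α < β := lt_trans hαt htβ
  have key1 : ∀ r ∈ Icc α β, G.γ r ∈ τ₁.seg → r = α ∨ r = β := by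
    intro r hr hrτ
    have hrI : r ∈ Icc 0 G.len := ⟨le_trans hαI.1 hr.1, le_trans hr.2 hβI.2⟩
    rcases eq_or_lt_of_le hr.1 with h | h
    · exact Or.inl h.symm
    rcases eq_or_lt_of_le hr.2 with h2 | h2
    · exact Or.inr h2
    · exact absurd (Or.inl ⟨hrI, hrτ⟩) (hgap r ⟨h, h2⟩)
  have key2 : ∀ r ∈ Icc α β, G.γ r ∈ τ₂.seg → r = α ∨ r = β := by
    intro r hr hrτ
    have hrI : r ∈ Icc 0 G.len := ⟨le_trans hαI.1 hr.1, le_trans hr.2 hβI.2⟩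
    rcases eq_or_lt_of_le hr.1 with h | h
    · exact Or.inl h.symm
    rcases eq_or_lt_of_le hr.2 with h2 | h2
    · exact Or.inr h2
    · exact absurd (Or.inr ⟨hrI, hrτ⟩) (hgap r ⟨h, h2⟩)
  have conc : ∀ A ∈ P, G.γ '' Icc α β ⊆ A →
      ∃ A ∈ P, ∃ t₁ t₂, 0 ≤ t₁ ∧ t₁ < t₀ ∧ t₀ < t₂ ∧ t₂ ≤ G.len ∧ G.γ '' Icc t₁ t₂ ⊆ A :=
    fun A hA hsub => ⟨A, hA, α, β, hαI.1, hαt, htβ, hβI.2, hsub⟩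
  by_cases hα1 : α ∈ S₁
  · by_cases hβ1 : β ∈ S₁
    · obtain ⟨A, hA, hsub⟩ := loc_big hT G hαI.1 hαβ hβI.2 τ₁ hα1.2 hβ1.2 key1
      exact conc A hA hsub
    · have hβ2 : β ∈ S₂ := by
        rcases hβm with h | h
        · exact absurd h hβ1
        · exact h
      by_cases hα2 : α ∈ S₂
      · obtain ⟨A, hA, hsub⟩ := loc_big hT G hαI.1 hαβ hβI.2 τ₂ hα2.2 hβ2.2 key2
        exact conc A hA hsub
      · -- mixed: α ∈ S₁ \ S₂, β ∈ S₂ \ S₁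
        obtain ⟨hpaI, hpaγ⟩ := τ₁.param_of_mem hα1.2
        obtain ⟨hqbI, hqbγ⟩ := τ₂.param_of_mem hβ2.2
        set W := (τ₁.portion (dist τ₁.src (G.γ α)) τ₁.len hpaI.1 hpaI.2 (le_refl _)).reverse
          with hW
        set V := τ₂.portion 0 (dist τ₂.src (G.γ β)) (le_refl _) hqbI.1 hqbI.2 with hV
        have hWd : W.dst = G.γ α := by
          rw [hW]
          simp only [Geo.reverse_dst, Geo.portion_src]
          exact hpaγ
        have hVd : V.dst = G.γ β := by
          rw [hV]
          simp only [Geo.portion_dst]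
          exact hqbγ
        have hzz : W.src = V.src := by
          rw [hW, hV]
          simp only [Geo.reverse_src, Geo.portion_dst, Geo.portion_src]
          exact hj.symm
        have hWsub : W.seg ⊆ τ₁.seg := by
          rw [hW]
          rw [Geo.reverse_seg]
          exact τ₁.portion_seg_subset _ _ _ _ _
        have hVsub : V.seg ⊆ τ₂.seg := by
          rw [hV]
          exact τ₂.portion_seg_subset _ _ _ _ _
        have hWint : ∀ r ∈ Icc α β, G.γ r ∈ W.seg → r = α := by
          intro r hr hrW
          rcases key1 r hr (hWsub hrW) with h | h
          · exact h
          · exact absurd (h ▸ hrW) (fun hc => hβ1 ⟨hβI, hWsub hc⟩)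
        have hVint : ∀ r ∈ Icc α β, G.γ r ∈ V.seg → r = β := by
          intro r hr hrV
          rcases key2 r hr (hVsub hrV) with h | h
          · exact absurd (h ▸ hrV) (fun hc => hα2 ⟨hαI, hVsub hc⟩)
          · exact h
        have hxV : G.γ α ∉ V.seg := fun h => hα2 ⟨hαI, hVsub h⟩
        have hyW : G.γ β ∉ W.seg := fun h => hβ1 ⟨hβI, hWsub h⟩
        obtain ⟨A, hA, hsub⟩ :=
          loc_tri hT G hαI.1 hαβ hβI.2 W V hWd hVd hzz hWint hVint hxV hyW
        exact conc A hA hsub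
  · have hα2 : α ∈ S₂ := by
      rcases hαm with h | h
      · exact absurd h hα1
      · exact h
    by_cases hβ2 : β ∈ S₂
    · obtain ⟨A, hA, hsub⟩ := loc_big hT G hαI.1 hαβ hβI.2 τ₂ hα2.2 hβ2.2 key2
      exact conc A hA hsub
    · have hβ1 : β ∈ S₁ := by
        rcases hβm with h | h
        · exact h
        · exact absurd h hβ2
      -- mixed: α ∈ S₂ \ S₁, β ∈ S₁ \ S₂
      obtain ⟨hpaI, hpaγ⟩ := τ₂.param_of_mem hα2.2
      obtain ⟨hqbI, hqbγ⟩ := τ₁.param_of_mem hβ1.2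
      set W := τ₂.portion 0 (dist τ₂.src (G.γ α)) (le_refl _) hpaI.1 hpaI.2 with hW
      set V := (τ₁.portion (dist τ₁.src (G.γ β)) τ₁.len hqbI.1 hqbI.2 (le_refl _)).reverse
        with hV
      have hWd : W.dst = G.γ α := by
        rw [hW]
        simp only [Geo.portion_dst]
        exact hpaγ
      have hVd : V.dst = G.γ β := by
        rw [hV]
        simp only [Geo.reverse_dst, Geo.portion_src]
        exact hqbγ
      have hzz : W.src = V.src := by
        rw [hW, hV]
        simp only [Geo.reverse_src, Geo.portion_dst, Geo.portion_src]
        exact hj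
      have hWsub : W.seg ⊆ τ₂.seg := by
        rw [hW]
        exact τ₂.portion_seg_subset _ _ _ _ _
      have hVsub : V.seg ⊆ τ₁.seg := by
        rw [hV]
        rw [Geo.reverse_seg]
        exact τ₁.portion_seg_subset _ _ _ _ _
      have hWint : ∀ r ∈ Icc α β, G.γ r ∈ W.seg → r = α := by
        intro r hr hrW
        rcases key2 r hr (hWsub hrW) with h | h
        · exact h
        · exact absurd (h ▸ hrW) (fun hc => hβ2 ⟨hβI, hWsub hc⟩)
      have hVint : ∀ r ∈ Icc α β, G.γ r ∈ V.seg → r = β := by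
        intro r hr hrV
        rcases key1 r hr (hVsub hrV) with h | h
        · exact absurd (h ▸ hrV) (fun hc => hα1 ⟨hαI, hVsub hc⟩)
        · exact h
      have hxV : G.γ α ∉ V.seg := fun h => hα1 ⟨hαI, hVsub h⟩
      have hyW : G.γ β ∉ W.seg := fun h => hβ2 ⟨hβI, hWsub h⟩
      obtain ⟨A, hA, hsub⟩ :=
        loc_tri hT G hαI.1 hαβ hβI.2 W V hWd hVd hzz hWint hVint hxV hyW
      exact conc A hA hsub

/-- Chains of geodesic segments. -/
inductive GChain : T → T → List (Geo T) → Prop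
  | nil (x : T) : GChain x x []
  | cons (S : Geo T) {v : T} {L : List (Geo T)} (h : GChain S.dst v L) : GChain S.src v (S :: L)

lemma GChain.nil_eq {x y : T} (h : GChain x y []) : x = y := by
  cases h; rfl

lemma GChain.cons_elim {x y : T} {S : Geo T} {L : List (Geo T)} (h : GChain x y (S :: L)) :
    x = S.src ∧ GChain S.dst y L := by
  cases h; exact ⟨rfl, by assumption⟩

lemma GChain.append {x y z : T} {L L' : List (Geo T)} (h : GChain x y L)
    (h' : GChain y z L') : GChain x z (L ++ L') := by
  induction h with
  | nil _ => exact h'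
  | cons S h ih => exact GChain.cons S (ih h')

lemma GChain.single (S : Geo T) : GChain S.src S.dst [S] := GChain.cons S (GChain.nil _)

lemma GChain.reverse {x y : T} {L : List (Geo T)} (h : GChain x y L) :
    GChain y x (L.reverse.map Geo.reverse) := by
  induction h with
  | nil x => exact GChain.nil x
  | cons S h ih =>
    simp only [List.reverse_cons, List.map_append, List.map_cons, List.map_nil]
    refine ih.append ?_
    have := GChain.single S.reverse
    rw [Geo.reverse_src, Geo.reverse_dst] at this
    exact this

open Set in
/-- The local lemma: if `m` is an interior point of a geodesic `G` and some chain of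
geodesics joins the endpoints of `G` avoiding `m`, then a piece contains a neighborhood
of `m` along `G`. -/
lemma loc (hT : IsTreeGraded T P) (L : List (Geo T)) :
    ∀ (G : Geo T) (t₀ : ℝ), t₀ ∈ Ioo 0 G.len →
    GChain G.src G.dst L → (∀ S ∈ L, G.γ t₀ ∉ S.seg) →
    ∃ A ∈ P, ∃ t₁ t₂, 0 ≤ t₁ ∧ t₁ < t₀ ∧ t₀ < t₂ ∧ t₂ ≤ G.len ∧ G.γ '' Icc t₁ t₂ ⊆ A := by
  induction L with
  | nil =>
    intro G t₀ ht₀ hchain _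
    exfalso
    have h := hchain.nil_eq
    have : G.len = 0 := by rw [← G.dist_src_dst, h, dist_self]
    rw [this] at ht₀
    exact absurd ht₀ (by simp)
  | cons S L ih =>
    intro G t₀ ht₀ hchain havoid
    obtain ⟨hx, hrest⟩ := hchain.cons_elim
    have hm1 : G.γ t₀ ∉ S.seg := havoid S (List.mem_cons_self)
    by_cases hzv : S.dst = G.dst
    · refine loc2 hT G S (Geo.triv G.dst) hx.symm (by simp [hzv]) (by simp) ht₀ hm1 ?_
      rw [Geo.triv_seg, mem_singleton_iff]
      intro h
      have hGd : G.dst = G.γ G.len := rfl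
      rw [hGd] at h
      have := G.injOn ⟨le_of_lt ht₀.1, le_of_lt ht₀.2⟩ ⟨G.len_nonneg, le_refl _⟩ h
      exact (ne_of_lt ht₀.2) this
    · obtain ⟨sH, hsH⟩ := hT.geodesic S.dst G.dst
      obtain ⟨H, hHs, hHd, hHseg⟩ := exists_geo_of_seg hsH
      by_cases hmH : G.γ t₀ ∈ H.seg
      · -- recurse on the tail with H, then transfer
        obtain ⟨hs₀I, hs₀γ⟩ := H.param_of_mem hmH
        have hs₀pos : 0 < dist H.src (G.γ t₀) := by
          rcases eq_or_lt_of_le hs₀I.1 with h | h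
          · exfalso
            have : H.γ 0 = H.src := rfl
            rw [← h] at hs₀γ
            rw [this] at hs₀γ
            rw [hHs] at hs₀γ
            exact hm1 (hs₀γ ▸ S.dst_mem)
          · exact h
        have hs₀lt : dist H.src (G.γ t₀) < H.len := by
          rcases eq_or_lt_of_le hs₀I.2 with h | h
          · exfalso
            have : H.γ H.len = H.dst := rfl
            rw [h] at hs₀γ
            rw [this, hHd] at hs₀γ
            have hGd : G.dst = G.γ G.len := rfl
            rw [hGd] at hs₀γ
            have := G.injOn ⟨G.len_nonneg, le_refl _⟩ ⟨le_of_lt ht₀.1, le_of_lt ht₀.2⟩ hs₀γ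
            exact (ne_of_lt ht₀.2) this.symm
          · exact h
        have hchainH : GChain H.src H.dst L := by
          rw [hHs, hHd]
          exact hrest
        have havoidH : ∀ S' ∈ L, H.γ (dist H.src (G.γ t₀)) ∉ S'.seg := by
          intro S' hS'
          rw [hs₀γ]
          exact havoid S' (List.mem_cons_of_mem _ hS')
        obtain ⟨A, hA, s₁, s₂, hs₁0, hs₁lt, hs₂gt, hs₂le, hseg⟩ :=
          ih H (dist H.src (G.γ t₀)) ⟨hs₀pos, hs₀lt⟩ hchainH havoidH
        obtain ⟨t₁, t₂, h1, h2, h3, h4, h5⟩ :=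
          transfer hT hA G H S hHd hx.symm hHs.symm ht₀ ⟨hs₀pos, hs₀lt⟩ hs₀γ hm1
            hs₁0 hs₁lt hs₂gt hs₂le hseg
        exact ⟨A, hA, t₁, t₂, h1, h2, h3, h4, h5⟩
      · exact loc2 hT G S H hx.symm hHs hHd ht₀ hm1 hmH

lemma segSymm {s : Set T} {x y : T} (h : IsGeodesicSegment s x y) :
    IsGeodesicSegment s y x := by
  obtain ⟨G, h1, h2, h3⟩ := exists_geo_of_seg h
  have hrev := G.reverse.isSeg
  rw [Geo.reverse_src, Geo.reverse_dst, Geo.reverse_seg, h1, h2, h3] at hrev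
  exact hrev

lemma GChain.from_mem {v u : T} : ∀ {L : List (Geo T)} {z : T}, GChain z v L →
    (∃ S ∈ L, u ∈ S.seg) →
    ∃ L' : List (Geo T), GChain u v L' ∧ L'.length ≤ L.length ∧
      ∀ S' ∈ L', ∃ S ∈ L, S'.seg ⊆ S.seg := by
  intro L
  induction L with
  | nil =>
    rintro z _ ⟨S, hS, _⟩
    exact absurd hS (List.not_mem_nil)
  | cons S L2 ih =>
    rintro z hchain ⟨S', hS', hu⟩
    obtain ⟨hz, hrest⟩ := hchain.cons_elim
    by_cases huS : u ∈ S.seg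
    · obtain ⟨hpI, hpγ⟩ := S.param_of_mem huS
      refine ⟨(S.portion (dist S.src u) S.len hpI.1 hpI.2 (le_refl _)) :: L2, ?_, by simp, ?_⟩
      · have h1 : (S.portion (dist S.src u) S.len hpI.1 hpI.2 (le_refl _)).src = u := by
          simp only [Geo.portion_src]; exact hpγ
        have h2 : (S.portion (dist S.src u) S.len hpI.1 hpI.2 (le_refl _)).dst = S.dst := by
          simp only [Geo.portion_dst]; rfl
        have hc := GChain.cons _ (h2 ▸ hrest)
        rwa [h1] at hc
      · rintro S'' hS''
        rcases List.mem_cons.mp hS'' with h | h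
        · exact ⟨S, List.mem_cons_self, h ▸ S.portion_seg_subset _ _ _ _ _⟩
        · exact ⟨S'', List.mem_cons_of_mem _ h, subset_refl _⟩
    · have hex : ∃ S'' ∈ L2, u ∈ S''.seg := by
        rcases List.mem_cons.mp hS' with h | h
        · exact absurd (h ▸ hu) huS
        · exact ⟨S', h, hu⟩
      obtain ⟨L', hc, hlen, hsub⟩ := ih hrest hex
      exact ⟨L', hc, le_trans hlen (by simp),
        fun S'' h => (hsub S'' h).imp (fun S3 h3 => ⟨List.mem_cons_of_mem _ h3.1, h3.2⟩)⟩

open Set in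
/-- The gate lemma: a chain of geodesics cannot meet a piece in exactly the two distinct
points `u, v` of the piece which are its endpoints. -/
lemma gate (hT : IsTreeGraded T P) : ∀ (n : ℕ) (L : List (Geo T)), L.length ≤ n →
    ∀ {A : Set T}, A ∈ P → ∀ {u v : T}, u ∈ A → v ∈ A → u ≠ v → GChain u v L →
    (∀ S ∈ L, S.seg ∩ A ⊆ {u, v}) → False := by
  intro n
  induction n with
  | zero =>
    intro L hL A hA u v hu hv huv hchain _
    rw [Nat.le_zero, List.length_eq_zero_iff] at hL
    exact huv (hL ▸ hchain).nil_eq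
  | succ n ihn =>
    intro L hL A hA u v hu hv huv hchain hcond
    match L, hchain with
    | [], hchain => exact huv hchain.nil_eq
    | [S], hchain => ?_
    | S :: S2 :: L2, hchain => ?_
    -- single segment: bigon with a geodesic inside A
    · obtain ⟨hx, hrest⟩ := hchain.cons_elim
      have hzv : S.dst = v := hrest.nil_eq
      obtain ⟨sγ, hsγ, hsγA⟩ := hT.piece_geodesic A hA u hu v hv
      have hS : IsGeodesicSegment S.seg u v := by
        have := S.isSeg
        rw [← hx, hzv] at this
        exact this
      have hScond := hcond S (List.mem_cons_self)
      have huS : u ∈ S.seg := by rw [hx]; exact S.src_mem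
      have hvS : v ∈ S.seg := by rw [← hzv]; exact S.dst_mem
      obtain ⟨huγ, hvγ⟩ := seg_endpoints hsγ
      have hint : S.seg ∩ sγ = {u, v} := by
        apply Subset.antisymm
        · intro q hq
          exact hScond ⟨hq.1, hsγA hq.2⟩
        · intro q hq
          rcases hq with h | h
          · rw [h]; exact ⟨huS, huγ⟩
          · rw [mem_singleton_iff] at h
            rw [h]; exact ⟨hvS, hvγ⟩
      obtain ⟨D, hD, hsub⟩ := bigon_piece hT huv hS hsγ hint
      have hDA : D = A := pieces_eq hT hD hA (hsub (Or.inr huγ)) hu (hsub (Or.inr hvγ)) hv huv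
      have hlen : 0 < S.len := by
        have : S.len = dist u v := by rw [← S.dist_src_dst, hx, hzv]
        rw [this]
        exact dist_pos.2 huv
      have hmid : S.γ (S.len / 2) ∈ S.seg ∩ A := by
        refine ⟨S.mem_seg ⟨by linarith, by linarith⟩, ?_⟩
        rw [← hDA]
        exact hsub (Or.inl (S.mem_seg ⟨by linarith, by linarith⟩))
      rcases hScond hmid with h | h
      · rw [hx] at h
        have := S.injOn ⟨by linarith, by linarith⟩ ⟨le_refl _, S.len_nonneg⟩ h
        linarith
      · rw [mem_singleton_iff, ← hzv] at h
        have := S.injOn ⟨by linarith, by linarith⟩ ⟨S.len_nonneg, le_refl _⟩ h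
        linarith
    -- at least two segments
    · obtain ⟨hx, hrest⟩ := hchain.cons_elim
      have hlenL : (S2 :: L2).length ≤ n := by
        have := hL
        simp only [List.length_cons] at this ⊢
        omega
      have huS : u ∈ S.seg := by rw [hx]; exact S.src_mem
      -- normalization: if u lies on the tail, shorten
      by_cases hutail : ∃ S' ∈ S2 :: L2, u ∈ S'.seg
      · obtain ⟨L', hc, hlen', hsub'⟩ := GChain.from_mem hrest hutail
        refine ihn L' (le_trans hlen' hlenL) hA hu hv huv hc ?_
        intro S' hS'
        obtain ⟨S3, hS3, hsub3⟩ := hsub' S' hS'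
        exact fun q hq => hcond S3 (List.mem_cons_of_mem _ hS3) ⟨hsub3 hq.1, hq.2⟩
      · push_neg at hutail
        -- normalization: if v lies on the first segment, shorten to a single segment
        by_cases hvS : v ∈ S.seg
        · obtain ⟨hpI, hpγ⟩ := S.param_of_mem hvS
          have hn1 : 1 ≤ n := by
            simp only [List.length_cons] at hL
            omega
          refine ihn [S.portion 0 (dist S.src v) (le_refl _) hpI.1 hpI.2]
            (by simpa using hn1) hA hu hv huv ?_ ?_
          · have h1 : (S.portion 0 (dist S.src v) (le_refl _) hpI.1 hpI.2).src = u := by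
              simp only [Geo.portion_src]
              rw [hx]
              rfl
            have h2 : (S.portion 0 (dist S.src v) (le_refl _) hpI.1 hpI.2).dst = v := by
              simp only [Geo.portion_dst]
              exact hpγ
            have hc := GChain.single (S.portion 0 (dist S.src v) (le_refl _) hpI.1 hpI.2)
            rwa [h1, h2] at hc
          · intro S' hS'
            rw [List.mem_singleton] at hS'
            intro q hq
            refine hcond S (List.mem_cons_self) ⟨?_, hq.2⟩
            rw [hS'] at hq
            exact S.portion_seg_subset _ _ _ _ _ hq.1
        · -- main case
          have hz : S.dst ∉ A ∨ S.dst ∈ A := (em _).symm.imp id id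
          by_cases hzA : S.dst ∈ A
          · -- z ∈ A : z = u or v; z ≠ v since v ∉ S.seg; z = u handled by hutail? no: z = u case:
            have hzuv := hcond S (List.mem_cons_self) ⟨S.dst_mem, hzA⟩
            rcases hzuv with h | h
            · -- S.dst = u : drop the first segment
              refine ihn (S2 :: L2) hlenL hA hu hv huv (h ▸ hrest) ?_
              exact fun S' hS' => hcond S' (List.mem_cons_of_mem _ hS')
            · rw [mem_singleton_iff] at h
              exact hvS (h ▸ S.dst_mem)
          · -- z ∉ A
            have hScondu : S.seg ∩ A ⊆ {u} := by
              intro q hq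
              rcases hcond S (List.mem_cons_self) hq with h | h
              · exact h
              · rw [mem_singleton_iff] at h
                exact absurd (h ▸ hq.1) hvS
            obtain ⟨sH, hsH⟩ := hT.geodesic S.dst v
            obtain ⟨H, hHs, hHd, hHseg⟩ := exists_geo_of_seg hsH
            set F := {s : ℝ | s ∈ Icc 0 H.len ∧ H.γ s ∈ A} with hF
            have hFc : IsClosed F := by
              have heq : F = Icc 0 H.len ∩ H.γ ⁻¹' A := by
                ext r; simp only [hF, mem_setOf_eq, mem_inter_iff, mem_preimage]
              rw [heq]
              exact ContinuousOn.preimage_isClosed_of_isClosed H.continuousOn isClosed_Icc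
                (hT.piece_closed A hA)
            have hlF : H.len ∈ F := ⟨⟨H.len_nonneg, le_refl _⟩, by
              show H.dst ∈ A
              rw [hHd]; exact hv⟩
            have hFne : F.Nonempty := ⟨H.len, hlF⟩
            have hFbdd : BddBelow F := BddBelow.mono (fun r hr => hr.1) bddBelow_Icc
            have hsf : sInf F ∈ F := hFc.csInf_mem hFne hFbdd
            have hsf0 : 0 < sInf F := by
              rcases eq_or_lt_of_le hsf.1.1 with h | h
              · exfalso
                have : H.γ 0 ∈ A := (h ▸ hsf).2
                have h0 : H.γ 0 = H.src := rfl
                rw [h0, hHs] at this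
                exact hzA this
              · exact h
            have hwA : H.γ (sInf F) ∈ A := hsf.2
            by_cases hwu : H.γ (sInf F) = u
            · -- w = u : contradiction via `loc` applied to the reversed geodesic
              have hsfl : sInf F < H.len := by
                rcases eq_or_lt_of_le hsf.1.2 with h | h
                · exfalso
                  rw [h] at hwu
                  have hh : H.γ H.len = H.dst := rfl
                  rw [hh, hHd] at hwu
                  exact huv hwu.symm
                · exact h
              -- H₊ ⊆ A
              obtain ⟨sγ, hsγ, hsγA⟩ := hT.piece_geodesic A hA u hu v hv
              obtain ⟨GA, hGAs, hGAd, hGAseg⟩ := exists_geo_of_seg hsγ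
              have hHp := geo_unique_in_piece hT hA GA
                (H.portion (sInf F) H.len hsf.1.1 hsf.1.2 (le_refl _))
                (by simp only [Geo.portion_src]; rw [hwu, hGAs])
                (by simp only [Geo.portion_dst]; rw [hGAd, ← hHd]; rfl)
                (by rw [hGAseg]; exact hsγA)
              rw [Geo.portion_seg] at hHp
              -- apply loc to the reversed H and reversed tail chain
              have hchainrev : GChain H.reverse.src H.reverse.dst
                  ((S2 :: L2).reverse.map Geo.reverse) := by
                rw [Geo.reverse_src, Geo.reverse_dst, hHs, hHd]
                exact hrest.reverse
              have havoid : ∀ S' ∈ (S2 :: L2).reverse.map Geo.reverse,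
                  H.reverse.γ (H.len - sInf F) ∉ S'.seg := by
                intro S' hS'
                obtain ⟨S3, hS3, rfl⟩ := List.mem_map.mp hS'
                rw [Geo.reverse_seg]
                have : H.reverse.γ (H.len - sInf F) = u := by
                  rw [Geo.reverse_γ]
                  have hh : H.len - (H.len - sInf F) = sInf F := by ring
                  rw [hh, hwu]
                rw [this]
                exact hutail S3 (List.mem_reverse.mp hS3)
              have hrI : H.len - sInf F ∈ Ioo 0 H.reverse.len := by
                rw [Geo.reverse_len]
                constructor <;> [linarith; linarith]
              obtain ⟨B, hB, r₁, r₂, hr₁0, hr₁, hr₂, hr₂l, hBsub⟩ :=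
                loc hT ((S2 :: L2).reverse.map Geo.reverse) H.reverse (H.len - sInf F)
                  hrI hchainrev havoid
              rw [Geo.reverse_len] at hr₂l
              -- B = A via the H₊ part
              have hmemB : ∀ r ∈ Icc r₁ r₂, H.γ (H.len - r) ∈ B := by
                intro r hr
                have := hBsub ⟨r, hr, rfl⟩
                rw [Geo.reverse_γ] at this
                exact this
              have hp1 : H.γ (H.len - r₁) ∈ B := hmemB r₁ ⟨le_refl _, by linarith⟩
              have hp2 : H.γ (H.len - (H.len - sInf F)) ∈ B :=
                hmemB _ ⟨by linarith, by linarith⟩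
              have hq1 : H.γ (H.len - r₁) ∈ A := hHp ⟨H.len - r₁, ⟨by linarith, by linarith⟩, rfl⟩
              have hq2 : H.γ (H.len - (H.len - sInf F)) ∈ A := by
                have hh : H.len - (H.len - sInf F) = sInf F := by ring
                rw [hh]
                exact hwA
              have hne12 : H.γ (H.len - r₁) ≠ H.γ (H.len - (H.len - sInf F)) := by
                intro h
                have := H.injOn ⟨by linarith, by linarith⟩ ⟨by linarith, by linarith⟩ h
                linarith
              have hBA : B = A := pieces_eq hT hB hA hp1 hq1 hp2 hq2 hne12
              -- contradiction with minimality of sInf F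
              have hq3 : H.γ (H.len - r₂) ∈ A := by
                rw [← hBA]
                exact hmemB r₂ ⟨by linarith, le_refl _⟩
              have : H.len - r₂ ∈ F := ⟨⟨by linarith, by linarith⟩, hq3⟩
              have := csInf_le hFbdd this
              linarith
            · -- w ≠ u : triangle contradiction
              have hScondA : S.seg ∩ A ⊆ {u} := hScondu
              obtain ⟨sδ, hsδ, hsδA⟩ := hT.piece_geodesic A hA u hu (H.γ (sInf F)) hwA
              have hcorner := corner S.reverse (H.portion 0 (sInf F) (le_refl _) hsf.1.1 hsf.1.2)
                (by simp only [Geo.reverse_src, Geo.portion_src]; rw [← hHs]; rfl)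
              obtain ⟨c, hcP, hcQ, sP, sQ, hsP, hsPsub, hsQ, hsQsub, hPQ⟩ := hcorner
              rw [Geo.reverse_seg] at hcP hsPsub
              rw [Geo.reverse_dst] at hsP
              rw [← hx] at hsP
              simp only [Geo.portion_dst] at hsQ
              rw [Geo.portion_seg] at hcQ hsQsub
              -- h₀ ∩ A = {w}
              have hh₀A : (H.γ '' Icc 0 (sInf F)) ∩ A ⊆ {H.γ (sInf F)} := by
                rintro q ⟨⟨s, hs, rfl⟩, hqA⟩
                have : s ∈ F := ⟨⟨hs.1, le_trans hs.2 hsf.1.2⟩, hqA⟩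
                have h1 : sInf F ≤ s := csInf_le hFbdd this
                have h2 : s = sInf F := le_antisymm hs.2 h1
                rw [mem_singleton_iff, h2]
              have hcA : c ∉ A := by
                intro hcA'
                have : c = u := hScondA ⟨hcP, hcA'⟩
                rw [this] at hcQ
                have : u = H.γ (sInf F) := mem_singleton_iff.mp (hh₀A ⟨hcQ, hu⟩)
                exact hwu this.symm
              have hucne : u ≠ c := fun h => hcA (h ▸ hu)
              have hcwne : c ≠ H.γ (sInf F) := fun h => hcA (h ▸ hwA)
              have huwne : u ≠ H.γ (sInf F) := fun h => hwu h.symm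
              -- triangle (u, c, w)
              have hi23 : sQ ∩ sδ = {H.γ (sInf F)} := by
                apply Subset.antisymm
                · intro q hq
                  exact hh₀A ⟨hsQsub hq.1, hsδA hq.2⟩
                · intro q hq
                  rw [mem_singleton_iff] at hq
                  rw [hq]
                  exact ⟨(seg_endpoints hsQ).2, (seg_endpoints hsδ).2⟩
              have hi31 : sδ ∩ sP = {u} := by
                apply Subset.antisymm
                · intro q hq
                  exact hScondA ⟨hsPsub hq.2, hsδA hq.1⟩
                · intro q hq
                  rw [mem_singleton_iff] at hq
                  rw [hq]
                  exact ⟨(seg_endpoints hsδ).1, (seg_endpoints hsP).1⟩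
              obtain ⟨D, hD, hsub⟩ := hT.triangle_in_piece (sP ∪ sQ ∪ sδ)
                ⟨u, c, H.γ (sInf F), sP, sQ, sδ, hucne, hcwne, huwne, hsP, hsQ,
                  segSymm hsδ, hPQ, hi23, hi31, rfl⟩
              have hDA : D = A := pieces_eq hT hD hA
                (hsub (Or.inr (seg_endpoints hsδ).1)) hu
                (hsub (Or.inr (seg_endpoints hsδ).2)) hwA huwne
              exact hcA (hDA ▸ hsub (Or.inl (Or.inl (seg_endpoints hsP).2)))

open Set in
/-- Dichotomy: either a chain of geodesics joins `a` to `b` avoiding `m`, or `m` belongs to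
every preconnected set containing `a` and `b`. -/
lemma cut_or_chain (hT : IsTreeGraded T P) (a b m : T) (hma : m ≠ a) (hmb : m ≠ b) :
    (∃ L, GChain a b L ∧ ∀ S ∈ L, m ∉ S.seg) ∨
    (∀ C : Set T, IsPreconnected C → a ∈ C → b ∈ C → m ∈ C) := by
  classical
  set step : T → T → Prop := fun w w' => ∃ S : Geo T, S.src = w ∧ S.dst = w' ∧ m ∉ S.seg
    with hstep
  have hreach_chain : ∀ {w : T}, Relation.ReflTransGen step a w →
      ∃ L, GChain a w L ∧ ∀ S ∈ L, m ∉ S.seg := by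
    intro w h
    induction h with
    | refl => exact ⟨[], GChain.nil a, fun S hS => absurd hS (List.not_mem_nil)⟩
    | tail _ hstep' ih =>
      obtain ⟨L, hL, hLm⟩ := ih
      obtain ⟨S, hSs, hSd, hSm⟩ := hstep'
      refine ⟨L ++ [S], ?_, ?_⟩
      · refine hL.append ?_
        have := GChain.single S
        rw [hSs, hSd] at this
        exact this
      · intro S' hS'
        rcases List.mem_append.mp hS' with h | h
        · exact hLm S' h
        · rw [List.mem_singleton] at h
          rw [h]
          exact hSm
  by_cases hreach : Relation.ReflTransGen step a b
  · exact Or.inl (hreach_chain hreach)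
  · right
    intro C hC haC hbC
    by_contra hmC
    set U := {w : T | w ≠ m ∧ Relation.ReflTransGen step a w} with hU
    set V := {w : T | w ≠ m ∧ ¬ Relation.ReflTransGen step a w} with hV
    have hstep_ball : ∀ w w' : T, dist w w' < dist w m → step w w' := by
      intro w w' hd
      obtain ⟨sS, hsS⟩ := hT.geodesic w w'
      obtain ⟨S, hSs, hSd, hSseg⟩ := exists_geo_of_seg hsS
      refine ⟨S, hSs, hSd, fun hm' => ?_⟩
      have h1 : dist S.src m ≤ S.len := S.dist_src_le hm'
      have h2 : S.len = dist w w' := by rw [← S.dist_src_dst, hSs, hSd]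
      rw [hSs] at h1
      rw [h2] at h1
      linarith [hd]
    have hUopen : IsOpen U := by
      rw [Metric.isOpen_iff]
      intro w hw
      refine ⟨dist w m / 2, by linarith [dist_pos.2 hw.1], ?_⟩
      intro w' hw'
      rw [Metric.mem_ball] at hw'
      have hw'm : w' ≠ m := by
        intro h
        rw [h] at hw'
        rw [dist_comm] at hw'
        linarith [dist_pos.2 hw.1]
      refine ⟨hw'm, hw.2.tail (hstep_ball w w' ?_)⟩
      rw [dist_comm w w']
      linarith [dist_pos.2 hw.1]
    have hVopen : IsOpen V := by
      rw [Metric.isOpen_iff]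
      intro w hw
      refine ⟨dist w m / 2, by linarith [dist_pos.2 hw.1], ?_⟩
      intro w' hw'
      rw [Metric.mem_ball] at hw'
      have hw'm : w' ≠ m := by
        intro h
        rw [h] at hw'
        rw [dist_comm] at hw'
        linarith [dist_pos.2 hw.1]
      refine ⟨hw'm, fun hr => hw.2 (hr.tail (hstep_ball w' w ?_))⟩
      have h1 : dist w m ≤ dist w w' + dist w' m := dist_triangle _ _ _
      have h2 : dist w' w = dist w w' := dist_comm _ _
      linarith
    have hcover : C ⊆ U ∪ V := by
      intro w hwC
      have hwm : w ≠ m := fun h => hmC (h ▸ hwC)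
      by_cases h : Relation.ReflTransGen step a w
      · exact Or.inl ⟨hwm, h⟩
      · exact Or.inr ⟨hwm, h⟩
    have hCU : (C ∩ U).Nonempty := ⟨a, haC, fun h => hma h.symm, Relation.ReflTransGen.refl⟩
    have hCV : (C ∩ V).Nonempty := ⟨b, hbC, fun h => hmb h.symm, hreach⟩
    obtain ⟨w, _, hwU, hwV⟩ := hC U V hUopen hVopen hcover hCU hCV
    exact hwV.2 hwU.2

/-- Last touching point of a geodesic with a closed set. -/
lemma Geo.last_touch (S : Geo T) {A : Set T} (hAc : IsClosed A) (hne : (S.seg ∩ A).Nonempty) :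
    ∃ t, t ∈ Set.Icc 0 S.len ∧ S.γ t ∈ A ∧
      (∀ r ∈ Set.Icc t S.len, S.γ r ∈ A → r = t) := by
  classical
  set J := {t : ℝ | t ∈ Set.Icc 0 S.len ∧ S.γ t ∈ A} with hJ
  have hJc : IsClosed J := by
    have heq : J = Set.Icc 0 S.len ∩ S.γ ⁻¹' A := by
      ext r; simp only [hJ, Set.mem_setOf_eq, Set.mem_inter_iff, Set.mem_preimage]
    rw [heq]
    exact ContinuousOn.preimage_isClosed_of_isClosed S.continuousOn isClosed_Icc hAc
  have hJne : J.Nonempty := by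
    obtain ⟨q, ⟨t, ht, rfl⟩, hqA⟩ := hne
    exact ⟨t, ht, hqA⟩
  have hJbdd : BddAbove J := BddAbove.mono (fun r hr => hr.1) bddAbove_Icc
  have hmem : sSup J ∈ J := hJc.csSup_mem hJne hJbdd
  refine ⟨sSup J, hmem.1, hmem.2, ?_⟩
  intro r hr hrA
  exact le_antisymm (le_csSup hJbdd ⟨⟨le_trans hmem.1.1 hr.1, hr.2⟩, hrA⟩) hr.1

/-- First touching point of a geodesic with a closed set. -/
lemma Geo.first_touch (S : Geo T) {A : Set T} (hAc : IsClosed A) (hne : (S.seg ∩ A).Nonempty) :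
    ∃ t, t ∈ Set.Icc 0 S.len ∧ S.γ t ∈ A ∧
      (∀ r ∈ Set.Icc (0:ℝ) t, S.γ r ∈ A → r = t) := by
  classical
  set J := {t : ℝ | t ∈ Set.Icc 0 S.len ∧ S.γ t ∈ A} with hJ
  have hJc : IsClosed J := by
    have heq : J = Set.Icc 0 S.len ∩ S.γ ⁻¹' A := by
      ext r; simp only [hJ, Set.mem_setOf_eq, Set.mem_inter_iff, Set.mem_preimage]
    rw [heq]
    exact ContinuousOn.preimage_isClosed_of_isClosed S.continuousOn isClosed_Icc hAc
  have hJne : J.Nonempty := by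
    obtain ⟨q, ⟨t, ht, rfl⟩, hqA⟩ := hne
    exact ⟨t, ht, hqA⟩
  have hJbdd : BddBelow J := BddBelow.mono (fun r hr => hr.1) bddBelow_Icc
  have hmem : sInf J ∈ J := hJc.csInf_mem hJne hJbdd
  refine ⟨sInf J, hmem.1, hmem.2, ?_⟩
  intro r hr hrA
  exact le_antisymm hr.2 (csInf_le hJbdd ⟨⟨hr.1, le_trans hr.2 hmem.1.2⟩, hrA⟩)

lemma GChain.dst_cases {x y : T} {L : List (Geo T)} (h : GChain x y L) :
    y = x ∨ ∃ S ∈ L, y ∈ S.seg := by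
  induction h with
  | nil x => exact Or.inl rfl
  | cons S h ih =>
    rcases ih with h' | ⟨S', hS', hy⟩
    · exact Or.inr ⟨S, List.mem_cons_self, h' ▸ S.dst_mem⟩
    · exact Or.inr ⟨S', List.mem_cons_of_mem _ hS', hy⟩

open Set Metric in
/-- Extraction: a chain from a point of a piece near `a` to `b ∈ A` near `b`, whose
segments each meet `A` only near `a` or only near `b`, leads to a contradiction. -/
lemma extract (hT : IsTreeGraded T P) {A : Set T} (hA : A ∈ P) {a b : T}
    (hb : b ∈ A) {ρ : ℝ} (hρ : 0 < ρ)
    (hdisj : ∀ q : T, q ∈ ball a ρ → q ∉ ball b ρ) :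
    ∀ (M : List (Geo T)) (w : T), GChain w b M →
    (∀ S ∈ M, S.seg ∩ A ⊆ ball a ρ ∨ S.seg ∩ A ⊆ ball b ρ) →
    ∀ u : T, u ∈ A → u ∈ ball a ρ → ∀ acc : List (Geo T), GChain u w acc →
    (∀ S ∈ acc, S.seg ∩ A ⊆ {u}) → False := by
  classical
  intro M
  induction M with
  | nil =>
    intro w hchain _ u huA hua acc hacc haccA
    have hwb : w = b := hchain.nil_eq
    have hub : u = b ∨ ∃ S ∈ acc, b ∈ S.seg := by
      rcases hacc.dst_cases with h | ⟨S, hS, hw⟩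
      · exact Or.inl (hwb ▸ h).symm
      · exact Or.inr ⟨S, hS, hwb ▸ hw⟩
    have hub' : u = b := by
      rcases hub with h | ⟨S, hS, hbS⟩
      · exact h
      · exact (haccA S hS ⟨hbS, hb⟩).symm
    exact hdisj b (hub' ▸ hua) (mem_ball_self hρ)
  | cons S M2 ih =>
    intro w hchain hcond u huA hua acc hacc haccA
    obtain ⟨hw, hrest⟩ := hchain.cons_elim
    rcases eq_empty_or_nonempty (S.seg ∩ A) with hempty | hne
    · -- segment avoids A entirely: extend the accumulator
      refine ih S.dst hrest (fun S' hS' => hcond S' (List.mem_cons_of_mem _ hS'))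
        u huA hua (acc ++ [S]) ?_ ?_
      · refine hacc.append ?_
        rw [hw]
        exact GChain.single S
      · intro S' hS'
        rcases List.mem_append.mp hS' with h | h
        · exact haccA S' h
        · rw [List.mem_singleton] at h
          rw [h, hempty]
          exact empty_subset _
    · rcases hcond S (List.mem_cons_self) with hball | hball
      · -- the segment touches A near a: restart from its last touching point
        obtain ⟨t, htI, htA, hlast⟩ := S.last_touch (hT.piece_closed A hA) hne
        have hu' : S.γ t ∈ ball a ρ := hball ⟨S.mem_seg htI, htA⟩
        refine ih S.dst hrest (fun S' hS' => hcond S' (List.mem_cons_of_mem _ hS'))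
          (S.γ t) htA hu' [S.portion t S.len htI.1 htI.2 (le_refl _)] ?_ ?_
        · have h1 : (S.portion t S.len htI.1 htI.2 (le_refl _)).src = S.γ t := by
            simp only [Geo.portion_src]
          have h2 : (S.portion t S.len htI.1 htI.2 (le_refl _)).dst = S.dst := by
            simp only [Geo.portion_dst]; rfl
          have hc := GChain.single (S.portion t S.len htI.1 htI.2 (le_refl _))
          rwa [h1, h2] at hc
        · intro S' hS'
          rw [List.mem_singleton] at hS'
          rw [hS']
          rw [Geo.portion_seg]
          rintro q ⟨⟨r, hr, rfl⟩, hqA⟩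
          rw [mem_singleton_iff, hlast r ⟨hr.1, hr.2⟩ hqA]
      · -- the segment touches A near b: close off with the gate lemma
        obtain ⟨t, htI, htA, hfirst⟩ := S.first_touch (hT.piece_closed A hA) hne
        have hv' : S.γ t ∈ ball b ρ := hball ⟨S.mem_seg htI, htA⟩
        have huv : u ≠ S.γ t := by
          intro h
          exact hdisj u hua (h ▸ hv')
        have hchain2 : GChain u (S.γ t) (acc ++ [S.portion 0 t (le_refl _) htI.1 htI.2]) := by
          refine hacc.append ?_
          have h1 : (S.portion 0 t (le_refl _) htI.1 htI.2).src = w := by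
            simp only [Geo.portion_src]
            rw [hw]
            rfl
          have h2 : (S.portion 0 t (le_refl _) htI.1 htI.2).dst = S.γ t := by
            simp only [Geo.portion_dst]
          have hc := GChain.single (S.portion 0 t (le_refl _) htI.1 htI.2)
          rwa [h1, h2] at hc
        refine gate hT (acc ++ [S.portion 0 t (le_refl _) htI.1 htI.2]).length _ (le_refl _)
          hA huA htA huv hchain2 ?_
        intro S' hS'
        rcases List.mem_append.mp hS' with h | h
        · exact fun q hq => Or.inl (haccA S' h hq)
        · rw [List.mem_singleton] at h
          rw [h, Geo.portion_seg]
          rintro q ⟨⟨r, hr, rfl⟩, hqA⟩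
          right
          rw [mem_singleton_iff, hfirst r ⟨hr.1, hr.2⟩ hqA]

open Set in
/-- If every interior point of a geodesic has a neighborhood inside some piece, and a piece
`A` contains a left-neighborhood of `c`, then `A` contains the whole initial portion. -/
lemma cover_half (hT : IsTreeGraded T P) (G : Geo T) {A : Set T} (hA : A ∈ P)
    (hloc : ∀ t₀ ∈ Ioo 0 G.len, ∃ B ∈ P, ∃ t₁ t₂,
      0 ≤ t₁ ∧ t₁ < t₀ ∧ t₀ < t₂ ∧ t₂ ≤ G.len ∧ G.γ '' Icc t₁ t₂ ⊆ B)
    {c : ℝ} (hc : c ∈ Ioo 0 G.len)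
    (hcA : ∃ c₁, 0 ≤ c₁ ∧ c₁ < c ∧ G.γ '' Icc c₁ c ⊆ A) :
    G.γ '' Icc 0 c ⊆ A := by
  classical
  obtain ⟨c₁, hc₁0, hc₁lt, hc₁sub⟩ := hcA
  set E := {t : ℝ | 0 ≤ t ∧ t ≤ c ∧ G.γ '' Icc t c ⊆ A} with hE
  have hc₁E : c₁ ∈ E := ⟨hc₁0, le_of_lt hc₁lt, hc₁sub⟩
  have hEne : E.Nonempty := ⟨c₁, hc₁E⟩
  have hEbdd : BddBelow E := ⟨0, fun e he => he.1⟩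
  have hinf0 : 0 ≤ sInf E := le_csInf hEne (fun e he => he.1)
  have hinfc₁ : sInf E ≤ c₁ := csInf_le hEbdd hc₁E
  have hinfmem : sInf E ∈ E := by
    refine ⟨hinf0, by linarith, ?_⟩
    rintro q ⟨r, hr, rfl⟩
    rcases eq_or_lt_of_le hr.1 with h | h
    · -- r = sInf E : closure argument
      rw [← h]
      have hclosed : IsClosed A := hT.piece_closed A hA
      rw [← hclosed.closure_eq]
      rw [Metric.mem_closure_iff]
      intro ε hε
      obtain ⟨e, heE, helt⟩ := exists_lt_of_csInf_lt hEne (show sInf E < sInf E + ε by linarith)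
      have hle : sInf E ≤ e := csInf_le hEbdd heE
      refine ⟨G.γ e, heE.2.2 ⟨e, ⟨le_refl _, heE.2.1⟩, rfl⟩, ?_⟩
      have hbound : dist (G.γ (sInf E)) (G.γ e) = |sInf E - e| := by
        apply G.isom
        · exact ⟨hinf0, by linarith [hc.2]⟩
        · exact ⟨heE.1, le_trans heE.2.1 (le_of_lt hc.2)⟩
      rw [hbound, abs_of_nonpos (by linarith), neg_sub]
      linarith
    · obtain ⟨e, heE, helt⟩ := exists_lt_of_csInf_lt hEne h
      exact heE.2.2 ⟨r, ⟨le_of_lt helt, hr.2⟩, rfl⟩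
  have hinfzero : sInf E = 0 := by
    by_contra hne0
    have hpos : 0 < sInf E := lt_of_le_of_ne hinf0 (Ne.symm hne0)
    obtain ⟨B, hB, d₁, d₂, hd₁0, hd₁lt, hd₂gt, hd₂le, hdsub⟩ :=
      hloc (sInf E) ⟨hpos, by linarith [hc.2]⟩
    have hinfltc : sInf E < c := by linarith
    have hw2 : sInf E < min d₂ c := lt_min hd₂gt hinfltc
    have hw2c : min d₂ c ≤ c := min_le_right _ _
    have hp1 : G.γ (sInf E) ∈ B := hdsub ⟨sInf E, ⟨le_of_lt hd₁lt, le_of_lt hd₂gt⟩, rfl⟩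
    have hp2 : G.γ (min d₂ c) ∈ B := hdsub ⟨min d₂ c, ⟨by linarith, min_le_left _ _⟩, rfl⟩
    have hq1 : G.γ (sInf E) ∈ A := hinfmem.2.2 ⟨sInf E, ⟨le_refl _, by linarith⟩, rfl⟩
    have hq2 : G.γ (min d₂ c) ∈ A := hinfmem.2.2 ⟨min d₂ c, ⟨le_of_lt hw2, hw2c⟩, rfl⟩
    have hneq : G.γ (sInf E) ≠ G.γ (min d₂ c) := by
      intro h
      have := G.injOn ⟨hinf0, by linarith [hc.2]⟩
        ⟨by linarith, le_trans hw2c (le_of_lt hc.2)⟩ h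
      linarith
    have hBA : B = A := pieces_eq hT hB hA hp1 hq1 hp2 hq2 hneq
    have hmaxE : max d₁ 0 ∈ E := by
      refine ⟨le_max_right _ _, max_le (by linarith) (by linarith), ?_⟩
      rintro q ⟨r, hr, rfl⟩
      rcases le_or_gt (sInf E) r with h | h
      · exact hinfmem.2.2 ⟨r, ⟨h, hr.2⟩, rfl⟩
      · have hrI : r ∈ Icc d₁ d₂ := ⟨le_trans (le_max_left _ _) hr.1, by linarith⟩
        rw [← hBA]
        exact hdsub ⟨r, hrI, rfl⟩
    have hlt : max d₁ 0 < sInf E := max_lt hd₁lt hpos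
    have := csInf_le hEbdd hmaxE
    linarith
  rintro q ⟨t, ht, rfl⟩
  exact hinfmem.2.2 ⟨t, ⟨hinfzero ▸ ht.1, ht.2⟩, rfl⟩

open Set Metric in
lemma main_thm (hT : IsTreeGraded T P) {R : Set T} (hR : IsFullSubspace P R)
    {x y : T} (hx : x ∈ R) (hy : y ∈ R) (f : Path x y)
    (hinj : Function.Injective ⇑f) : Set.range ⇑f ⊆ R := by
  classical
  by_contra hcon
  rw [Set.not_subset] at hcon
  obtain ⟨p, hpmem, hpR⟩ := hcon
  obtain ⟨tb, rfl⟩ := hpmem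
  set F : ℝ → T := fun r => f (Set.projIcc 0 1 zero_le_one r) with hF
  have hFcont : Continuous F := f.continuous.comp continuous_projIcc
  have hFval : ∀ t : unitInterval, F ↑t = f t := by
    intro t
    rw [hF]
    simp only [Set.projIcc_val]
  have hF0 : F 0 = x := by
    rw [hF]
    simp only [Set.projIcc_left]
    exact f.source
  have hF1 : F 1 = y := by
    rw [hF]
    simp only [Set.projIcc_right]
    exact f.target
  set K := {r : ℝ | r ∈ Icc (0:ℝ) 1 ∧ F r ∈ R} with hK
  have hKc : IsClosed K := by
    have heq : K = Icc (0:ℝ) 1 ∩ F ⁻¹' R := by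
      ext r; simp only [hK, mem_setOf_eq, mem_inter_iff, mem_preimage]
    rw [heq]
    exact ContinuousOn.preimage_isClosed_of_isClosed hFcont.continuousOn isClosed_Icc hR.1
  have h0K : (0:ℝ) ∈ K := ⟨⟨le_refl _, zero_le_one⟩, by rw [hF0]; exact hx⟩
  have h1K : (1:ℝ) ∈ K := ⟨⟨zero_le_one, le_refl _⟩, by rw [hF1]; exact hy⟩
  have htbK : (tb : ℝ) ∉ K := fun h => hpR (by rw [← hFval]; exact h.2)
  obtain ⟨u₀, v₀, hu₀K, hv₀K, hu₀0, hu₀t, htv₀, hv₀1, hgapK⟩ :=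
    gap_lemma hKc h0K h1K tb.2.1 tb.2.2 htbK
  set a := F u₀ with ha
  set b := F v₀ with hb
  have haR : a ∈ R := hu₀K.2
  have hbR : b ∈ R := hv₀K.2
  have hu₀v₀ : u₀ < v₀ := lt_trans hu₀t htv₀
  have hab : a ≠ b := by
    intro h
    rw [ha, hb, hF] at h
    have := hinj h
    rw [Set.projIcc_of_mem zero_le_one hu₀K.1, Set.projIcc_of_mem zero_le_one hv₀K.1] at this
    have : u₀ = v₀ := Subtype.mk_eq_mk.mp this
    linarith
  set β := F '' Icc u₀ v₀ with hβ
  have haβ : a ∈ β := ⟨u₀, ⟨le_refl _, le_of_lt hu₀v₀⟩, rfl⟩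
  have hbβ : b ∈ β := ⟨v₀, ⟨le_of_lt hu₀v₀, le_refl _⟩, rfl⟩
  have hβR : β ∩ R ⊆ {a, b} := by
    rintro q ⟨⟨r, hr, rfl⟩, hqR⟩
    have hrI : r ∈ Icc (0:ℝ) 1 := ⟨le_trans hu₀K.1.1 hr.1, le_trans hr.2 hv₀K.1.2⟩
    rcases eq_or_lt_of_le hr.1 with h | h
    · rw [← h]; exact Or.inl rfl
    rcases eq_or_lt_of_le hr.2 with h2 | h2
    · rw [h2]; exact Or.inr rfl
    · exact absurd ⟨hrI, hqR⟩ (hgapK r ⟨h, h2⟩)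
  have hβconn : IsPreconnected β := (isPreconnected_Icc).image F hFcont.continuousOn
  have hβcomp : IsCompact β := isCompact_Icc.image hFcont
  -- the geodesic from a to b
  obtain ⟨sG, hsG⟩ := hT.geodesic a b
  obtain ⟨G, hGs, hGd, hGseg⟩ := exists_geo_of_seg hsG
  have hGlen : 0 < G.len := by
    have : G.len = dist a b := by rw [← G.dist_src_dst, hGs, hGd]
    rw [this]
    exact dist_pos.2 hab
  -- every interior point of G admits a chain from a to b avoiding it
  have hchains : ∀ t₀ ∈ Ioo 0 G.len, ∃ L, GChain a b L ∧ ∀ S ∈ L, G.γ t₀ ∉ S.seg := by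
    intro t₀ ht₀
    have hma : G.γ t₀ ≠ a := by
      intro h
      rw [← hGs] at h
      have := G.injOn ⟨le_of_lt ht₀.1, le_of_lt ht₀.2⟩ ⟨le_refl _, G.len_nonneg⟩ h
      linarith [ht₀.1]
    have hmb : G.γ t₀ ≠ b := by
      intro h
      rw [← hGd] at h
      have := G.injOn ⟨le_of_lt ht₀.1, le_of_lt ht₀.2⟩ ⟨G.len_nonneg, le_refl _⟩ h
      linarith [ht₀.2]
    rcases cut_or_chain hT a b (G.γ t₀) hma hmb with h | h
    · exact h
    · exfalso
      have hmR : G.γ t₀ ∈ R := h R hR.2.1.isPreconnected haR hbR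
      have hmβ : G.γ t₀ ∈ β := h β hβconn haβ hbβ
      rcases hβR ⟨hmβ, hmR⟩ with h' | h'
      · exact hma h'
      · exact hmb (mem_singleton_iff.mp h')
  have hloc' : ∀ t₀ ∈ Ioo 0 G.len, ∃ B ∈ P, ∃ t₁ t₂,
      0 ≤ t₁ ∧ t₁ < t₀ ∧ t₀ < t₂ ∧ t₂ ≤ G.len ∧ G.γ '' Icc t₁ t₂ ⊆ B := by
    intro t₀ ht₀
    obtain ⟨L, hL, hLm⟩ := hchains t₀ ht₀
    exact loc hT L G t₀ ht₀ (by rw [hGs, hGd]; exact hL) hLm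
  -- a single piece contains the whole geodesic
  obtain ⟨A, hA, c₁, c₂, hc₁0, hc₁lt, hc₂gt, hc₂le, hcsub⟩ :=
    hloc' (G.len/2) ⟨by linarith, by linarith⟩
  have hhalfL : G.γ '' Icc 0 (G.len/2) ⊆ A := by
    refine cover_half hT G hA hloc' ⟨by linarith, by linarith⟩ ⟨c₁, hc₁0, hc₁lt, ?_⟩
    exact fun q ⟨r, hr, hq⟩ => hcsub ⟨r, ⟨hr.1, le_trans hr.2 (le_of_lt hc₂gt)⟩, hq⟩
  have hrevloc : ∀ t₀ ∈ Ioo 0 G.reverse.len, ∃ B ∈ P, ∃ t₁ t₂,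
      0 ≤ t₁ ∧ t₁ < t₀ ∧ t₀ < t₂ ∧ t₂ ≤ G.reverse.len ∧ G.reverse.γ '' Icc t₁ t₂ ⊆ B := by
    intro t₀ ht₀
    rw [Geo.reverse_len] at ht₀
    obtain ⟨B, hB, t₁, t₂, h1, h2, h3, h4, h5⟩ :=
      hloc' (G.len - t₀) ⟨by linarith [ht₀.2], by linarith [ht₀.1]⟩
    refine ⟨B, hB, G.len - t₂, G.len - t₁, by linarith, by linarith, by linarith,
      by simp only [Geo.reverse_len]; linarith, ?_⟩
    rintro q ⟨r, hr, rfl⟩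
    rw [Geo.reverse_γ]
    exact h5 ⟨G.len - r, ⟨by linarith [hr.2], by linarith [hr.1]⟩, rfl⟩
  have hhalfR : G.γ '' Icc (G.len/2) G.len ⊆ A := by
    have hcA' : G.reverse.γ '' Icc (G.len - c₂) (G.len/2) ⊆ A := by
      rintro q ⟨r, hr, rfl⟩
      rw [Geo.reverse_γ]
      exact hcsub ⟨G.len - r, ⟨by linarith [hr.2], by linarith [hr.1]⟩, rfl⟩
    have hrev := cover_half hT G.reverse hA hrevloc (c := G.len/2)
      (by rw [Geo.reverse_len]; exact ⟨by linarith, by linarith⟩)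
      ⟨G.len - c₂, by linarith, by linarith, hcA'⟩
    rintro q ⟨r, hr, rfl⟩
    have heq : G.γ r = G.reverse.γ (G.len - r) := by
      rw [Geo.reverse_γ]
      congr 1
      ring
    rw [heq]
    exact hrev ⟨G.len - r, ⟨by linarith [hr.2], by linarith [hr.1]⟩, rfl⟩
  have hGA : G.seg ⊆ A := by
    rintro q ⟨t, ht, rfl⟩
    rcases le_total t (G.len/2) with h | h
    · exact hhalfL ⟨t, ⟨ht.1, h⟩, rfl⟩
    · exact hhalfR ⟨t, ⟨h, ht.2⟩, rfl⟩
  have haA : a ∈ A := by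
    have := hGA G.src_mem
    rwa [hGs] at this
  have hbA : b ∈ A := by
    have := hGA G.dst_mem
    rwa [hGd] at this
  have hAR : A ⊆ R := hR.2.2 A hA (fun hs => hab (hs ⟨haA, haR⟩ ⟨hbA, hbR⟩))
  set dab := dist a b with hdab
  have hdabpos : 0 < dab := by rw [hdab]; exact dist_pos.2 hab
  set ρ := dab / 4 with hρdef
  have hρ : 0 < ρ := by rw [hρdef]; linarith
  have hdisj : ∀ q : T, q ∈ ball a ρ → q ∉ ball b ρ := by
    intro q hqa hqb
    rw [mem_ball] at hqa hqb
    have h3 := dist_triangle a q b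
    rw [dist_comm a q] at h3
    rw [← hdab] at h3
    rw [hρdef] at hqa hqb
    linarith
  have hsep : ∃ δ > 0, ∀ p' ∈ β, ∀ q ∈ A, q ∉ ball a ρ → q ∉ ball b ρ → δ ≤ dist p' q := by
    set D := (A ∩ (ball a ρ)ᶜ) ∩ (ball b ρ)ᶜ with hD
    rcases eq_empty_or_nonempty D with hDe | hDne
    · refine ⟨1, one_pos, fun p' _ q hqA hq1 hq2 => ?_⟩
      exact absurd (hDe ▸ (⟨⟨hqA, hq1⟩, hq2⟩ : q ∈ D)) (notMem_empty q)
    · have hDc : IsClosed D :=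
        ((hT.piece_closed A hA).inter isOpen_ball.isClosed_compl).inter
          isOpen_ball.isClosed_compl
      have hβD : ∀ q ∈ β, q ∉ D := by
        intro q hqβ hqD
        rcases hβR ⟨hqβ, hAR hqD.1.1⟩ with h | h
        · exact hqD.1.2 (h ▸ mem_ball_self hρ)
        · exact hqD.2 ((mem_singleton_iff.mp h) ▸ mem_ball_self hρ)
      obtain ⟨p₀, hp₀β, hp₀min⟩ := hβcomp.exists_isMinOn ⟨a, haβ⟩
        (continuous_infDist_pt D).continuousOn
      have hp₀pos : 0 < infDist p₀ D := by
        rcases (infDist_nonneg (s := D) (x := p₀)).lt_or_eq with h | h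
        · exact h
        · exact absurd ((hDc.mem_iff_infDist_zero hDne).mpr h.symm) (hβD p₀ hp₀β)
      refine ⟨infDist p₀ D, hp₀pos, fun p' hp' q hqA hq1 hq2 => ?_⟩
      calc infDist p₀ D ≤ infDist p' D := hp₀min hp'
      _ ≤ dist p' q := infDist_le_dist_of_mem ⟨⟨hqA, hq1⟩, hq2⟩
  obtain ⟨δ, hδ, hsepδ⟩ := hsep
  set ε := min (δ/2) (dab/8) with hε
  have hεpos : 0 < ε := lt_min (by linarith) (by linarith)
  have hεδ : ε < δ := lt_of_le_of_lt (min_le_left _ _) (by linarith)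
  have hεd : ε ≤ dab/8 := min_le_right _ _
  have hFuc : UniformContinuous F :=
    (CompactSpace.uniformContinuous_of_continuous f.continuous).comp
      (LipschitzWith.projIcc zero_le_one).uniformContinuous
  obtain ⟨δuc, hδucpos, huc⟩ := Metric.uniformContinuous_iff.mp hFuc ε hεpos
  obtain ⟨N, hN⟩ := exists_nat_gt ((v₀ - u₀)/δuc)
  have hNpos : 0 < (N:ℝ) := lt_of_le_of_lt (div_nonneg (by linarith) (le_of_lt hδucpos)) hN
  set w : ℕ → ℝ := fun i => u₀ + (v₀ - u₀) * i / N with hw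
  have hw0 : w 0 = u₀ := by rw [hw]; simp
  have hwN : w N = v₀ := by
    rw [hw]
    field_simp
    ring
  have hwmem : ∀ i : ℕ, i ≤ N → w i ∈ Icc u₀ v₀ := by
    intro i hi
    rw [hw]
    constructor
    · have h1 : 0 ≤ (v₀ - u₀) * i / N :=
        div_nonneg (mul_nonneg (by linarith) (Nat.cast_nonneg i)) (le_of_lt hNpos)
      simp only []
      linarith
    · have hiN : (i:ℝ) ≤ N := Nat.cast_le.mpr hi
      have h1 : (v₀ - u₀) * i / N ≤ v₀ - u₀ := by
        rw [div_le_iff₀ hNpos]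
        have h2 : (v₀ - u₀) * i ≤ (v₀ - u₀) * N :=
          mul_le_mul_of_nonneg_left hiN (by linarith)
        linarith
      simp only []
      linarith
  have hwstep : ∀ i : ℕ, dist (F (w i)) (F (w (i+1))) < ε := by
    intro i
    apply huc
    rw [Real.dist_eq, hw]
    have heq : (u₀ + (v₀ - u₀) * i / N) - (u₀ + (v₀ - u₀) * (↑(i+1)) / N)
        = -((v₀ - u₀)/N) := by
      push_cast
      field_simp
      ring
    simp only []
    rw [heq, abs_neg, abs_of_nonneg (div_nonneg (by linarith) (le_of_lt hNpos))]
    rw [div_lt_iff₀ hNpos]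
    calc v₀ - u₀ = ((v₀ - u₀)/δuc) * δuc := by field_simp
    _ < N * δuc := mul_lt_mul_of_pos_right hN hδucpos
    _ = δuc * N := mul_comm _ _
  have hbuild : ∀ k : ℕ, k ≤ N → ∃ L : List (Geo T), GChain (F (w (N - k))) (F (w N)) L ∧
      ∀ S ∈ L, ∃ p' ∈ β, S.seg ⊆ closedBall p' ε := by
    intro k
    induction k with
    | zero =>
      intro _
      rw [Nat.sub_zero]
      exact ⟨[], GChain.nil _, fun S hS => absurd hS (List.not_mem_nil)⟩
    | succ k ihk =>
      intro hk
      obtain ⟨L, hL, hLm⟩ := ihk (Nat.le_of_succ_le hk)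
      have hi1 : N - k = (N - (k+1)) + 1 := by omega
      obtain ⟨sS, hsS⟩ := hT.geodesic (F (w (N - (k+1)))) (F (w ((N - (k+1)) + 1)))
      obtain ⟨S, hSs, hSd, hSseg⟩ := exists_geo_of_seg hsS
      refine ⟨S :: L, ?_, ?_⟩
      · rw [hi1] at hL
        have hc := GChain.cons S (by rw [hSd]; exact hL)
        rwa [hSs] at hc
      · intro S' hS'
        rcases List.mem_cons.mp hS' with h | h
        · rw [h]
          refine ⟨F (w (N - (k+1))), ⟨w (N - (k+1)), hwmem _ (by omega), rfl⟩, ?_⟩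
          intro q hq
          rw [mem_closedBall, dist_comm, ← hSs]
          have h1 : dist S.src q ≤ S.len := S.dist_src_le hq
          have h2 : S.len = dist (F (w (N - (k+1)))) (F (w ((N - (k+1)) + 1))) := by
            rw [← S.dist_src_dst, hSs, hSd]
          calc dist S.src q ≤ S.len := h1
          _ ≤ ε := by
            rw [h2]
            exact le_of_lt (hwstep _)
        · exact hLm S' h
  obtain ⟨LB, hLB, hLBm⟩ := hbuild N (le_refl N)
  rw [Nat.sub_self, hw0, hwN] at hLB
  have hOK : ∀ S ∈ LB, S.seg ∩ A ⊆ ball a ρ ∨ S.seg ∩ A ⊆ ball b ρ := by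
    intro S hS
    obtain ⟨p', hp'β, hball⟩ := hLBm S hS
    rcases eq_empty_or_nonempty (S.seg ∩ A) with he | ⟨q₀, hq₀⟩
    · left
      rw [he]
      exact empty_subset _
    · have hballmem : ∀ q' ∈ S.seg ∩ A, q' ∈ ball a ρ ∪ ball b ρ := by
        intro q' hq'
        by_contra hq'n
        rw [mem_union] at hq'n
        push_neg at hq'n
        have h1 := hsepδ p' hp'β q' hq'.2 hq'n.1 hq'n.2
        have h2 : dist q' p' ≤ ε := hball hq'.1
        rw [dist_comm] at h2
        linarith
      have hfar : ∀ q1 q2 : T, q1 ∈ S.seg ∩ A → q2 ∈ S.seg ∩ A →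
          q1 ∈ ball a ρ → q2 ∈ ball b ρ → False := by
        intro q1 q2 hq1 hq2 hb1 hb2
        have hd1 : dist q1 p' ≤ ε := hball hq1.1
        have hd2 : dist q2 p' ≤ ε := hball hq2.1
        have hd3 : dist q1 q2 ≤ dist q1 p' + dist p' q2 := dist_triangle _ _ _
        rw [dist_comm p' q2] at hd3
        have hta : dist a b ≤ dist a q1 + dist q1 b := dist_triangle _ _ _
        have htb : dist q1 b ≤ dist q1 q2 + dist q2 b := dist_triangle _ _ _
        rw [mem_ball] at hb1 hb2
        rw [dist_comm a q1] at hta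
        rw [← hdab] at hta
        rw [hρdef] at hb1 hb2
        linarith
      rcases hballmem q₀ hq₀ with h | h
      · left
        intro q' hq'
        rcases hballmem q' hq' with h' | h'
        · exact h'
        · exact absurd (hfar q₀ q' hq₀ hq' h h') (fun hc => hc)
      · right
        intro q' hq'
        rcases hballmem q' hq' with h' | h'
        · exact absurd (hfar q' q₀ hq' hq₀ h' h) (fun hc => hc)
        · exact h'
  exact extract hT hA hbA hρ hdisj LB a hLB hOK a haA (mem_ball_self hρ) [] (GChain.nil a)
    (fun S hS => absurd hS (List.not_mem_nil))



end TGAux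


/-- In a tree-graded space, a full subspace is strongly convex: every topological arc
between two of its points lies entirely in it. -/
theorem IsFullSubspace.strongly_convex {T : Type*} [MetricSpace T] {P : Set (Set T)}
    {R : Set T} (hT : IsTreeGraded T P) (hR : IsFullSubspace P R)
    {x y : T} (hx : x ∈ R) (hy : y ∈ R) (f : Path x y)
    (hinj : Function.Injective ⇑f) : Set.range ⇑f ⊆ R :=
  TGAux.main_thm hT hR hx hy f hinj
end

section
/- In a tree-graded space T, for any two points x, y the set Cutp(x,y) is closed. -/
/-- The set `Cutp(x,y)` computed along a geodesic `γ` from `x` to `y`: the points of the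
geodesic not lying in the interior of a subsegment of positive length contained in a
piece. -/
def geodesicCutp {T : Type*} [MetricSpace T] (P : Set (Set T)) (γ : ℝ → T) (x y : T) :
    Set T :=
  {p | ∃ t ∈ Set.Icc (0 : ℝ) (dist x y), γ t = p ∧
    ¬ ∃ a ∈ Set.Icc (0 : ℝ) (dist x y), ∃ b ∈ Set.Icc (0 : ℝ) (dist x y),
      a < t ∧ t < b ∧ ∃ A ∈ P, γ '' Set.Icc a b ⊆ A}

/-- In a tree-graded space, the set `Cutp(x,y)` of cut points of a geodesic from `x` to
`y` is closed. -/
theorem isClosed_geodesicCutp {T : Type*} [MetricSpace T] {P : Set (Set T)}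
    (hT : IsTreeGraded T P) {x y : T} {γ : ℝ → T} (hγ : IsGeodesicFrom γ x y) :
    IsClosed (geodesicCutp P γ x y) := by
  obtain ⟨hγ0, hγd, hiso⟩ := hγ
  set d := dist x y with hd
  set B : Set ℝ := {t | ∃ a ∈ Set.Icc (0 : ℝ) d, ∃ b ∈ Set.Icc (0 : ℝ) d,
    a < t ∧ t < b ∧ ∃ A ∈ P, γ '' Set.Icc a b ⊆ A} with hB
  have hBopen : IsOpen B := by
    rw [isOpen_iff_mem_nhds]
    rintro t ⟨a, ha, b, hb, hat, htb, A, hA, hsub⟩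
    filter_upwards [Ioo_mem_nhds hat htb] with s hs
    exact ⟨a, ha, b, hb, hs.1, hs.2, A, hA, hsub⟩
  have hScomp : IsCompact (Set.Icc (0 : ℝ) d \ B) := isCompact_Icc.diff hBopen
  have hcont : ContinuousOn γ (Set.Icc (0 : ℝ) d) := by
    apply LipschitzOnWith.continuousOn (K := 1)
    intro s hs t ht
    rw [edist_dist, edist_dist, hiso s hs t ht, Real.dist_eq]
    simp
  have himg : geodesicCutp P γ x y = γ '' (Set.Icc (0 : ℝ) d \ B) := by
    ext p
    constructor
    · rintro ⟨t, ht, rfl, hn⟩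
      exact ⟨t, ⟨ht, hn⟩, rfl⟩
    · rintro ⟨t, ⟨ht, hn⟩, rfl⟩
      exact ⟨t, ht, rfl, hn⟩
  rw [himg]
  exact (hScomp.image_of_continuousOn (hcont.mono Set.diff_subset)).isClosed
end

section
/- Let G be a group generated by a finite set S, acting by isometries on a graph X via actions ρₙ twisted by automorphisms (or homomorphisms) φₙ, i.e., ρₙ(g)·x = φₙ(g)·x. For each n set λₙ = min over vertices x of max over s∈S of d(x, φₙ(s)·x), and choose basepoints oₙ realising this minimum. Fix a non-principal ultrafilter ω and assume λₙ → ∞. Then the limit action of G on the asymptotic cone Cone_ω(X, (1/λₙ), (oₙ)) has no global fixed point. -/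
/-- Paulin's construction: if `G` is generated by a finite set `S`, acts on a metric
space `X` via twisted actions `ρₙ`, `λₙ = min_x max_{s ∈ S} d(x, ρₙ(s)x)` is realised at
basepoints `oₙ`, and `λₙ → ∞`, then the limit action of `G` on the asymptotic cone
`Cone_ω(X, (1/λₙ), (oₙ))` has no global fixed point.  (A point of the cone is the class
of an admissible sequence `(xₙ)`; it is fixed by `g` iff `d(xₙ, ρₙ(g)xₙ)/λₙ → 0`
along `ω`.) -/
theorem limit_action_no_global_fixed_point {G X : Type*} [Group G] [MetricSpace X]
    (S : Finset G) (hSne : S.Nonempty) (hSgen : Subgroup.closure (S : Set G) = ⊤)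
    (ρ : ℕ → G →* (X ≃ᵢ X))
    (o : ℕ → X) (lam : ℕ → ℝ)
    (hlam : ∀ n, lam n = S.sup' hSne fun s => dist (o n) ((ρ n s) (o n)))
    (hmin : ∀ n, ∀ x : X, lam n ≤ S.sup' hSne fun s => dist x ((ρ n s) x))
    (ω : Ultrafilter ℕ) (hω : (ω : Filter ℕ) ≤ Filter.cofinite)
    (hinfty : Filter.Tendsto lam Filter.atTop Filter.atTop) :
    ¬ ∃ x : ℕ → X,
        (∃ M : ℝ, ∀ᶠ n in (ω : Filter ℕ), dist (o n) (x n) / lam n ≤ M) ∧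
        ∀ g : G, Filter.Tendsto (fun n => dist (x n) ((ρ n g) (x n)) / lam n)
          (ω : Filter ℕ) (nhds 0) := by
  rintro ⟨x, -, hfix⟩
  have hωtop : (ω : Filter ℕ) ≤ Filter.atTop := by
    rwa [← Nat.cofinite_eq_atTop]
  have hpos : ∀ᶠ n in (ω : Filter ℕ), 1 ≤ lam n :=
    hωtop (hinfty.eventually (Filter.eventually_ge_atTop 1))
  have hsmall : ∀ᶠ n in (ω : Filter ℕ),
      ∀ s ∈ S, dist (x n) ((ρ n s) (x n)) / lam n < 1 / 2 := by
    rw [Filter.eventually_all_finset]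
    intro s _
    exact (hfix s).eventually (gt_mem_nhds (by norm_num))
  rcases (hpos.and hsmall).exists with ⟨n, h1, h2⟩
  have hlampos : (0 : ℝ) < lam n := lt_of_lt_of_le one_pos h1
  have : S.sup' hSne (fun s => dist (x n) ((ρ n s) (x n))) < lam n := by
    rw [Finset.sup'_lt_iff]
    intro s hs
    have := h2 s hs
    rw [div_lt_iff₀ hlampos] at this
    calc dist (x n) ((ρ n s) (x n)) < 1 / 2 * lam n := this
      _ < lam n := by linarith
  exact absurd (hmin n (x n)) (not_le.mpr this)
end

section
/- Let (X, ν) be a coarse median space, Y a metric space, and π : Y → X a quasi-isometric embedding whose image is C-almost median, meaning there is C ≥ 0 such that for all a,b,c ∈ Y the point ν(π(a), π(b), π(c)) lies within distance C of π(Y). Then Y admits a coarse median operation; explicitly, choosing for each triple (a,b,c) a point ζ(a,b,c) ∈ Y with d(π(ζ(a,b,c)), ν(π(a),π(b),π(c))) ≤ C defines a coarse median on Y. -/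
/-- `μ` is a coarse median with constant `κ` for the distance function `d`. -/
def IsCoarseMedianWith {Z : Type*} (d : Z → Z → ℝ) (μ : Z → Z → Z → Z) (κ : ℝ) : Prop :=
  (∀ a b : Z, d (μ a a b) a ≤ κ) ∧
  (∀ f : Fin 3 → Z, ∀ σ : Equiv.Perm (Fin 3),
    d (μ (f 0) (f 1) (f 2)) (μ (f (σ 0)) (f (σ 1)) (f (σ 2))) ≤ κ) ∧
  (∀ a a' b c : Z, d (μ a b c) (μ a' b c) ≤ κ * d a a' + κ) ∧
  (∀ a b c e : Z, d (μ (μ a b c) b e) (μ a b (μ c b e)) ≤ κ)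

/-- The cyclic permutation (0 2 1) on `Fin 3`, sending 0 ↦ 2, 1 ↦ 0, 2 ↦ 1. -/
def cyc3 : Equiv.Perm (Fin 3) :=
  ⟨fun i => ![2, 0, 1] i, fun i => ![1, 2, 0] i, by decide, by decide⟩

/-- If `π : Y → X` is a quasi-isometric embedding into a coarse median space `(X, ν)`
whose image is `C`-almost median, then any choice function `ζ` with
`d(π(ζ(a,b,c)), ν(πa,πb,πc)) ≤ C` is a coarse median on `Y`; in particular `Y` admits a
coarse median operation. -/
theorem coarseMedian_of_qie_almost_median {X Y : Type*} [PseudoMetricSpace X]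
    [PseudoMetricSpace Y]
    (ν : X → X → X → X) (hν : ∃ κ : ℝ, 0 ≤ κ ∧ IsCoarseMedianWith dist ν κ)
    (π : Y → X) (A B : ℝ) (hA : 0 < A) (hB : 0 ≤ B)
    (hqi : ∀ a b : Y, dist a b / A - B ≤ dist (π a) (π b) ∧
      dist (π a) (π b) ≤ A * dist a b + B)
    (C : ℝ) (hC : 0 ≤ C)
    (halmost : ∀ a b c : Y, ∃ y : Y, dist (π y) (ν (π a) (π b) (π c)) ≤ C) :
    (∃ ζ : Y → Y → Y → Y, ∀ a b c : Y, dist (π (ζ a b c)) (ν (π a) (π b) (π c)) ≤ C) ∧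
    ∀ ζ : Y → Y → Y → Y,
      (∀ a b c : Y, dist (π (ζ a b c)) (ν (π a) (π b) (π c)) ≤ C) →
      ∃ κ : ℝ, 0 ≤ κ ∧ IsCoarseMedianWith dist ζ κ := by
  obtain ⟨κ, hκ, h0, hsym, h1, h2⟩ := hν
  constructor
  · exact ⟨fun a b c => (halmost a b c).choose, fun a b c => (halmost a b c).choose_spec⟩
  intro ζ hζ
  -- pull back distances through π
  have pull : ∀ y y' : Y, dist y y' ≤ A * (dist (π y) (π y') + B) := by
    intro y y'
    have h := (hqi y y').1
    have h' : dist y y' / A ≤ dist (π y) (π y') + B := by linarith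
    calc dist y y' = A * (dist y y' / A) := by field_simp
    _ ≤ A * (dist (π y) (π y') + B) := by
        exact mul_le_mul_of_nonneg_left h' hA.le
  -- swap lemma: ν x y c ~ ν c x y
  have swap : ∀ x y c : X, dist (ν x y c) (ν c x y) ≤ κ := by
    intro x y c
    have := hsym ![x, y, c] cyc3
    simpa [cyc3] using this
  -- third-argument variant of (C1)
  have h3 : ∀ x y c c' : X, dist (ν x y c) (ν x y c') ≤ κ * dist c c' + 3 * κ := by
    intro x y c c'
    have t1 := swap x y c
    have t2 := h1 c c' x y
    have t3 : dist (ν c' x y) (ν x y c') ≤ κ := by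
      rw [dist_comm]; exact swap x y c'
    calc dist (ν x y c) (ν x y c')
        ≤ dist (ν x y c) (ν c x y) + dist (ν c x y) (ν c' x y)
            + dist (ν c' x y) (ν x y c') := dist_triangle4 _ _ _ _
    _ ≤ κ + (κ * dist c c' + κ) + κ := by gcongr
    _ = κ * dist c c' + 3 * κ := by ring
  set K : ℝ := A * A * κ + A * (6 * κ + 4 * κ * C + 4 * C + κ * B + B) with hK
  have hK0 : 0 ≤ K := by positivity
  refine ⟨K, hK0, ?_, ?_, ?_, ?_⟩
  · -- (C0)
    intro a b
    have p := pull (ζ a a b) a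
    have q : dist (π (ζ a a b)) (π a) ≤ C + κ := by
      calc dist (π (ζ a a b)) (π a)
          ≤ dist (π (ζ a a b)) (ν (π a) (π a) (π b)) + dist (ν (π a) (π a) (π b)) (π a) :=
            dist_triangle _ _ _
      _ ≤ C + κ := add_le_add (hζ a a b) (h0 (π a) (π b))
    rw [hK] at *
    nlinarith [hA.le, mul_nonneg hA.le hκ, mul_nonneg hA.le hC, mul_nonneg hA.le hB,
      mul_nonneg hA.le (mul_nonneg hκ hC), mul_nonneg hA.le (mul_nonneg hκ hB),
      mul_nonneg (mul_nonneg hA.le hA.le) hκ]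
  · -- symmetry
    intro f σ
    have p := pull (ζ (f 0) (f 1) (f 2)) (ζ (f (σ 0)) (f (σ 1)) (f (σ 2)))
    have q : dist (π (ζ (f 0) (f 1) (f 2))) (π (ζ (f (σ 0)) (f (σ 1)) (f (σ 2)))) ≤
        C + κ + C := by
      calc dist (π (ζ (f 0) (f 1) (f 2))) (π (ζ (f (σ 0)) (f (σ 1)) (f (σ 2))))
          ≤ dist (π (ζ (f 0) (f 1) (f 2))) (ν (π (f 0)) (π (f 1)) (π (f 2)))
            + dist (ν (π (f 0)) (π (f 1)) (π (f 2)))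
                (ν (π (f (σ 0))) (π (f (σ 1))) (π (f (σ 2))))
            + dist (ν (π (f (σ 0))) (π (f (σ 1))) (π (f (σ 2))))
                (π (ζ (f (σ 0)) (f (σ 1)) (f (σ 2)))) := dist_triangle4 _ _ _ _
      _ ≤ C + κ + C := by
          refine add_le_add (add_le_add (hζ _ _ _) ?_) ?_
          · simpa using hsym (fun i => π (f i)) σ
          · rw [dist_comm]; exact hζ _ _ _
    rw [hK] at *
    nlinarith [hA.le, mul_nonneg hA.le hκ, mul_nonneg hA.le hC, mul_nonneg hA.le hB,
      mul_nonneg hA.le (mul_nonneg hκ hC), mul_nonneg hA.le (mul_nonneg hκ hB),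
      mul_nonneg (mul_nonneg hA.le hA.le) hκ]
  · -- (C1)
    intro a a' b c
    have p := pull (ζ a b c) (ζ a' b c)
    have qq := (hqi a a').2
    have q : dist (π (ζ a b c)) (π (ζ a' b c)) ≤
        C + (κ * (A * dist a a' + B) + κ) + C := by
      calc dist (π (ζ a b c)) (π (ζ a' b c))
          ≤ dist (π (ζ a b c)) (ν (π a) (π b) (π c))
            + dist (ν (π a) (π b) (π c)) (ν (π a') (π b) (π c))
            + dist (ν (π a') (π b) (π c)) (π (ζ a' b c)) := dist_triangle4 _ _ _ _
      _ ≤ C + (κ * (A * dist a a' + B) + κ) + C := by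
          refine add_le_add (add_le_add (hζ _ _ _) ?_) ?_
          · calc dist (ν (π a) (π b) (π c)) (ν (π a') (π b) (π c))
                ≤ κ * dist (π a) (π a') + κ := h1 _ _ _ _
            _ ≤ κ * (A * dist a a' + B) + κ := by
                have := mul_le_mul_of_nonneg_left qq hκ
                linarith
          · rw [dist_comm]; exact hζ _ _ _
    have hd : (0:ℝ) ≤ dist a a' := dist_nonneg
    rw [hK] at *
    nlinarith [hA.le, mul_nonneg hA.le hκ, mul_nonneg hA.le hC, mul_nonneg hA.le hB,
      mul_nonneg hA.le (mul_nonneg hκ hC), mul_nonneg hA.le (mul_nonneg hκ hB),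
      mul_nonneg (mul_nonneg hA.le hA.le) hκ,
      mul_nonneg (mul_nonneg hA.le (add_nonneg (add_nonneg (add_nonneg
        (add_nonneg (by positivity : (0:ℝ) ≤ 6*κ) (by positivity : (0:ℝ) ≤ 4*κ*C))
        (by positivity : (0:ℝ) ≤ 4*C)) (mul_nonneg hκ hB)) hB)) hd]
  · -- (C2)
    intro a b c e
    have p := pull (ζ (ζ a b c) b e) (ζ a b (ζ c b e))
    have q : dist (π (ζ (ζ a b c) b e)) (π (ζ a b (ζ c b e))) ≤
        C + (κ * C + κ) + κ + (κ * C + 3 * κ) + C := by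
      calc dist (π (ζ (ζ a b c) b e)) (π (ζ a b (ζ c b e)))
          ≤ dist (π (ζ (ζ a b c) b e)) (ν (π (ζ a b c)) (π b) (π e))
            + dist (ν (π (ζ a b c)) (π b) (π e)) (ν (ν (π a) (π b) (π c)) (π b) (π e))
            + dist (ν (ν (π a) (π b) (π c)) (π b) (π e))
                (ν (π a) (π b) (ν (π c) (π b) (π e)))
            + dist (ν (π a) (π b) (ν (π c) (π b) (π e))) (ν (π a) (π b) (π (ζ c b e)))
            + dist (ν (π a) (π b) (π (ζ c b e))) (π (ζ a b (ζ c b e))) :=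
            by
              have t1 := dist_triangle4 (π (ζ (ζ a b c) b e)) (ν (π (ζ a b c)) (π b) (π e))
                (ν (ν (π a) (π b) (π c)) (π b) (π e)) (ν (π a) (π b) (ν (π c) (π b) (π e)))
              have t2 := dist_triangle (ν (π a) (π b) (ν (π c) (π b) (π e)))
                (ν (π a) (π b) (π (ζ c b e))) (π (ζ a b (ζ c b e)))
              have t3 := dist_triangle (π (ζ (ζ a b c) b e))
                (ν (π a) (π b) (ν (π c) (π b) (π e))) (π (ζ a b (ζ c b e)))
              linarith
      _ ≤ C + (κ * C + κ) + κ + (κ * C + 3 * κ) + C := by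
          refine add_le_add (add_le_add (add_le_add (add_le_add (hζ _ _ _) ?_)
            (h2 _ _ _ _)) ?_) ?_
          · calc dist (ν (π (ζ a b c)) (π b) (π e)) (ν (ν (π a) (π b) (π c)) (π b) (π e))
                ≤ κ * dist (π (ζ a b c)) (ν (π a) (π b) (π c)) + κ := h1 _ _ _ _
            _ ≤ κ * C + κ := by
                have := mul_le_mul_of_nonneg_left (hζ a b c) hκ; linarith
          · calc dist (ν (π a) (π b) (ν (π c) (π b) (π e))) (ν (π a) (π b) (π (ζ c b e)))
                ≤ κ * dist (ν (π c) (π b) (π e)) (π (ζ c b e)) + 3 * κ := h3 _ _ _ _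
            _ ≤ κ * C + 3 * κ := by
                have hcc : dist (ν (π c) (π b) (π e)) (π (ζ c b e)) ≤ C := by
                  rw [dist_comm]; exact hζ _ _ _
                have := mul_le_mul_of_nonneg_left hcc hκ; linarith
          · rw [dist_comm]; exact hζ _ _ _
    rw [hK] at *
    nlinarith [hA.le, mul_nonneg hA.le hκ, mul_nonneg hA.le hC, mul_nonneg hA.le hB,
      mul_nonneg hA.le (mul_nonneg hκ hC), mul_nonneg hA.le (mul_nonneg hκ hB),
      mul_nonneg (mul_nonneg hA.le hA.le) hκ]
end
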